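/- arXiv:0706.2147 — 4 statements merged into one kernel-verified Lean document; each statement's English description precedes it below -/
import Mathlib

section
/- Replica representation of truncated correlations: Let γ ∈ {1,…,n} satisfy gcd(n, γ) = 1. Then for all sites i₁, …, iₙ ∈ Λ, the truncated correlation of n spins equals n^{(n−2)/2} times the (untruncated) replica expectation of the product of s-variables: ⟨σ_{i₁} σ_{i₂} ⋯ σ_{iₙ}⟩^T_{Λ,β} = n^{(n−2)/2} · ⟨⟨ s^{(γ)}_{i₁} s^{(γ)}_{i₂} ⋯ s^{(γ)}_{iₙ} ⟩⟩_{Λ,β}. -/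
open scoped BigOperators Classical
noncomputable section

namespace IsingReplica

/-- Lattice sites in `ℤ^d`. -/
abbrev Site (d : ℕ) := Fin d → ℤ

/-- `i` and `j` are nearest neighbors: `|i - j| = 1`. -/
def nn {d : ℕ} (i j : Site d) : Prop := (∑ k, |i k - j k|) = 1

instance {d : ℕ} (i j : Site d) : Decidable (nn i j) :=
  inferInstanceAs (Decidable ((∑ k, |i k - j k|) = 1))

/-- The spin values `{+1, -1}`. -/
abbrev SpinVal : Type := ↥({1, -1} : Finset ℤ)

/-- Spin configurations on a finite volume `Λ`. -/
abbrev Config {d : ℕ} (Λ : Finset (Site d)) : Type := {x // x ∈ Λ} → SpinVal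

/-- The spin at a site, as a real number (extended by `+1` outside `Λ`). -/
def spin {d : ℕ} {Λ : Finset (Site d)} (σ : Config Λ) (i : Site d) : ℝ :=
  if h : i ∈ Λ then ((σ ⟨i, h⟩ : ℤ) : ℝ) else 1

/-- The boundary sites of `Λ`: sites whose unit cube shares a `(d-1)`-face with the
topological boundary of the union of the closed unit cubes of `Λ`; equivalently,
sites of `Λ` having a nearest neighbor outside `Λ`. -/
def latBoundary {d : ℕ} (Λ : Finset (Site d)) : Finset (Site d) :=
  Λ.filter fun i => ∃ j, nn i j ∧ j ∉ Λ

/-- `+1` boundary conditions. -/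
def PlusBC {d : ℕ} {Λ : Finset (Site d)} (σ : Config Λ) : Prop :=
  ∀ i (h : i ∈ Λ), i ∈ latBoundary Λ → ((σ ⟨i, h⟩ : ℤ) = 1)

/-- The Ising Hamiltonian `H_Λ(σ) = Σ_{⟨i,j⟩} (1 - σ_i σ_j)`, the sum over unordered
nearest-neighbor pairs written as half the sum over ordered pairs. -/
def HΛ {d : ℕ} {Λ : Finset (Site d)} (σ : Config Λ) : ℝ :=
  (1 / 2) * ∑ i : {x // x ∈ Λ}, ∑ j : {x // x ∈ Λ},
    if nn i.1 j.1 then 1 - spin σ i.1 * spin σ j.1 else 0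

/-- The partition function with `+1` boundary conditions. -/
def Z {d : ℕ} (Λ : Finset (Site d)) (β : ℝ) : ℝ :=
  ∑ σ : Config Λ, if PlusBC σ then Real.exp (-β * HΛ σ) else 0

/-- The Gibbs expectation `⟨f⟩_{Λ,β}` with `+1` boundary conditions. -/
def gibbsExp {d : ℕ} (Λ : Finset (Site d)) (β : ℝ) (f : Config Λ → ℝ) : ℝ :=
  (Z Λ β)⁻¹ * ∑ σ : Config Λ, if PlusBC σ then f σ * Real.exp (-β * HΛ σ) else 0

/-- The set partitions of `{0, …, m-1}`: families of nonempty blocks such that every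
element lies in exactly one block. -/
def partitions (m : ℕ) : Finset (Finset (Finset (Fin m))) :=
  Finset.univ.filter fun P =>
    (∀ B ∈ P, B.Nonempty) ∧ ∀ x : Fin m, ∃! B, B ∈ P ∧ x ∈ B

/-- The truncated (connected) correlation
`⟨σ_{j 0} ⋯ σ_{j (m-1)}⟩^T = Σ_𝒫 (-1)^(|𝒫|-1) (|𝒫|-1)! ∏_{B ∈ 𝒫} ⟨∏_{k ∈ B} σ_{j k}⟩`. -/
def truncCorr {d : ℕ} (Λ : Finset (Site d)) (β : ℝ) {m : ℕ} (j : Fin m → Site d) : ℝ :=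
  ∑ P ∈ partitions m,
    (-1 : ℝ) ^ (P.card - 1) * (Nat.factorial (P.card - 1) : ℝ) *
      ∏ B ∈ P, gibbsExp Λ β fun σ => ∏ k ∈ B, spin σ (j k)

/-- `n`-replica configurations on `Λ`. -/
abbrev RConfig {d : ℕ} (Λ : Finset (Site d)) (n : ℕ) : Type :=
  {x // x ∈ Λ} → Fin n → SpinVal

/-- The replica component `σ^{(α)}` (the index `a : Fin n` encodes `α = a + 1`). -/
def comp {d n : ℕ} {Λ : Finset (Site d)} (σv : RConfig Λ n) (a : Fin n) : Config Λ :=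
  fun i => σv i a

/-- `+1` boundary conditions in every replica component. -/
def RPlusBC {d n : ℕ} {Λ : Finset (Site d)} (σv : RConfig Λ n) : Prop :=
  ∀ a, PlusBC (comp σv a)

/-- The replica Hamiltonian `H_rep(σ⃗) = Σ_α H_Λ(σ^{(α)})`. -/
def Hrep {d n : ℕ} {Λ : Finset (Site d)} (σv : RConfig Λ n) : ℝ :=
  ∑ a, HΛ (comp σv a)

/-- The spin of the replica component `α = a + 1` at site `i`. -/
def rspin {d n : ℕ} {Λ : Finset (Site d)} (σv : RConfig Λ n) (a : Fin n) (i : Site d) : ℝ :=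
  spin (comp σv a) i

/-- `ω = e^{2πi/n}`, the primitive `n`-th root of unity. -/
def rootn (n : ℕ) : ℂ := Complex.exp (2 * Real.pi * Complex.I / n)

/-- The replica Fourier variables
`s_i^{(γ)}(σ⃗) = n^{-1/2} Σ_{α'=1}^n ω^{γ(α'-1)} σ_i^{(α')}`
(the summation index `a : Fin n` encodes `α' = a + 1`). -/
def sVar {d n : ℕ} {Λ : Finset (Site d)} (γ : ℕ) (σv : RConfig Λ n) (i : Site d) : ℂ :=
  (Real.sqrt n : ℂ)⁻¹ * ∑ a : Fin n, rootn n ^ (γ * (a : ℕ)) * (rspin σv a i : ℂ)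

/-- The replica expectation `⟨⟨F⟩⟩_{Λ,β} = Z^{-n} Σ_{σ⃗} F(σ⃗) e^{-β H_rep(σ⃗)}`. -/
def rExp {d : ℕ} (Λ : Finset (Site d)) (β : ℝ) (n : ℕ) (F : RConfig Λ n → ℂ) : ℂ :=
  ((Z Λ β ^ n : ℝ) : ℂ)⁻¹ *
    ∑ σv : RConfig Λ n,
      if RPlusBC σv then F σv * Complex.exp (-(β : ℂ) * (Hrep σv : ℂ)) else 0

/-- The truncated replica expectation of `m` factors, defined by the partition formula. -/
def rTrunc {d : ℕ} (Λ : Finset (Site d)) (β : ℝ) (n : ℕ) {m : ℕ}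
    (F : Fin m → RConfig Λ n → ℂ) : ℂ :=
  ∑ P ∈ partitions m,
    (-1 : ℂ) ^ (P.card - 1) * (Nat.factorial (P.card - 1) : ℂ) *
      ∏ B ∈ P, rExp Λ β n fun σv => ∏ k ∈ B, F k σv

/-- Connectivity of `a` and `b` by a nearest-neighbor path inside the set `X`. -/
def connIn {d : ℕ} (X : Finset (Site d)) (a b : Site d) : Prop :=
  Relation.ReflTransGen (fun x y => x ∈ X ∧ y ∈ X ∧ nn x y) a b

/-- The sites of `Λ` where all replica components equal `+1`. -/
def onesSet {d n : ℕ} {Λ : Finset (Site d)} (σv : RConfig Λ n) : Finset (Site d) :=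
  Λ.filter fun i => ∀ h : i ∈ Λ, ∀ a, ((σv ⟨i, h⟩ a : ℤ) = 1)

/-- The replica sea: the part of the all-ones set connected to the boundary `∂Λ`. -/
def sea {d n : ℕ} {Λ : Finset (Site d)} (σv : RConfig Λ n) : Finset (Site d) :=
  (onesSet σv).filter fun i => ∃ j ∈ latBoundary Λ, connIn (onesSet σv) j i

/-- `K` is a continent of `σ⃗`: a connected component of `Λ \ 𝒮(σ⃗)`. -/
def IsContinent {d n : ℕ} {Λ : Finset (Site d)} (σv : RConfig Λ n)
    (K : Finset (Site d)) : Prop :=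
  K.Nonempty ∧ K ⊆ Λ \ sea σv ∧
    (∀ a ∈ K, ∀ b ∈ K, connIn (Λ \ sea σv) a b) ∧
    (∀ a ∈ K, ∀ b ∈ Λ \ sea σv, connIn (Λ \ sea σv) a b → b ∈ K)

/-- The local cyclic replica transformation `π_𝒦`: on sites of `K` it cyclically shifts
the replica index (`(π_𝒦 σ⃗)_i^{(α)} = σ_i^{(α-1)}`, indices mod `n`), elsewhere it is
the identity. -/
def piK {d n : ℕ} {Λ : Finset (Site d)} (K : Finset (Site d)) (σv : RConfig Λ n) :
    RConfig Λ n :=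
  fun i a => if (i : Site d) ∈ K then σv i ⟨((a : ℕ) + n - 1) % n, Nat.mod_lt _ a.pos⟩ else σv i a

/-- The length of the shortest tree connecting the sites `i 0, …, i (m-1)`:
the minimal number of edges of a connected subgraph of the nearest-neighbor graph
on `ℤ^d` whose vertex set contains all the given sites. -/
def treeLen {d m : ℕ} (i : Fin m → Site d) : ℕ :=
  sInf {r : ℕ | ∃ E : Finset (Site d × Site d),
    E.card = r ∧ (∀ e ∈ E, nn e.1 e.2) ∧
    ∀ x ∈ Finset.univ.image i ∪ E.image Prod.fst ∪ E.image Prod.snd,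
      ∀ y ∈ Finset.univ.image i ∪ E.image Prod.fst ∪ E.image Prod.snd,
        Relation.ReflTransGen (fun a b => (a, b) ∈ E ∨ (b, a) ∈ E) x y}

/-- A face: the common `(d-1)`-face of the unit cubes centered at `c` and `c + e_k`,
encoded by the pair `(c, k)`. -/
abbrev Face (d : ℕ) := Site d × Fin d

/-- The face `(c, k)` as a subset of `ℝ^d`. -/
def faceSet {d : ℕ} (F : Face d) : Set (Fin d → ℝ) :=
  {x | x F.2 = (F.1 F.2 : ℝ) + 1 / 2 ∧ ∀ j, j ≠ F.2 → |x j - (F.1 j : ℝ)| ≤ 1 / 2}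

/-- Two faces are adjacent if they are distinct and their intersection contains a
`(d-2)`-dimensional unit cube. -/
def adjFace {d : ℕ} (F F' : Face d) : Prop :=
  F ≠ F' ∧ ∃ j₁ j₂ : Fin d, j₁ ≠ j₂ ∧ ∃ z : Fin d → ℝ,
    {x : Fin d → ℝ | x j₁ = z j₁ ∧ x j₂ = z j₂ ∧
        ∀ j, j ≠ j₁ → j ≠ j₂ → z j ≤ x j ∧ x j ≤ z j + 1} ⊆ faceSet F ∩ faceSet F'

/-- Connectivity of faces by a chain of adjacent faces inside `Y`. -/
def faceConnIn {d : ℕ} (Y : Finset (Face d)) (A B : Face d) : Prop :=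
  Relation.ReflTransGen (fun x y => x ∈ Y ∧ y ∈ Y ∧ adjFace x y) A B

/-- A connected surface. -/
def SurfConnected {d : ℕ} (Y : Finset (Face d)) : Prop :=
  ∀ F ∈ Y, ∀ F' ∈ Y, faceConnIn Y F F'

/-- The `k`-th coordinate unit vector. -/
def unitVec {d : ℕ} (k : Fin d) : Site d := fun j => if j = k then 1 else 0

/-- The broken faces of a spin configuration: common faces of nearest-neighbor pairs
in `Λ` whose spins differ. -/
def brokenFaces {d : ℕ} {Λ : Finset (Site d)} (σ : Config Λ) : Finset (Face d) :=
  (Λ ×ˢ (Finset.univ : Finset (Fin d))).filter fun F =>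
    F.1 + unitVec F.2 ∈ Λ ∧ spin σ F.1 ≠ spin σ (F.1 + unitVec F.2)

/-- The faces forming the topological boundary of the union of the unit cubes of `K`. -/
def bFaces {d : ℕ} (K : Finset (Site d)) : Finset (Face d) :=
  ((K ×ˢ (Finset.univ : Finset (Fin d))).filter fun F => F.1 + unitVec F.2 ∉ K) ∪
    (((K ×ˢ (Finset.univ : Finset (Fin d))).image fun F => (F.1 - unitVec F.2, F.2)).filter
      fun F => F.1 ∉ K)

/-- The component `C^{(α)}(𝒦, σ⃗)` of the replica continent contour: the union of
those contours (connected components of broken faces) of `σ^{(α)}` sharing at least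
one face with `∂𝒦`. -/
def contContour {d n : ℕ} {Λ : Finset (Site d)} (σv : RConfig Λ n) (K : Finset (Site d))
    (a : Fin n) : Finset (Face d) :=
  (brokenFaces (comp σv a)).filter fun F =>
    ∃ F₀ ∈ brokenFaces (comp σv a), F₀ ∈ bFaces K ∧ faceConnIn (brokenFaces (comp σv a)) F₀ F

/-- `C(𝒦)`: the set of replica continent contours `C⃗(𝒦, σ⃗)` as `σ⃗` ranges over
`n`-replica configurations (with `+1` boundary conditions) having `𝒦` as a continent. -/
def contourSet {d : ℕ} (Λ : Finset (Site d)) (n : ℕ) (K : Finset (Site d)) :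
    Set (Fin n → Finset (Face d)) :=
  {C | ∃ σv : RConfig Λ n, RPlusBC σv ∧ IsContinent σv K ∧ ∀ a, C a = contContour σv K a}


section Aux
open Finset

lemma sum_pow_eq_zero {n : ℕ} {ζ : ℂ} (hζ : ζ ^ n = 1) {r : ℕ} (h1 : 0 < r) (h2 : r < n)
    (hprim : ∀ k, 0 < k → k < n → ζ ^ k ≠ 1) :
    ∑ b : Fin n, ζ ^ (r * (b : ℕ)) = 0 := by
  have hne : ζ ^ r ≠ 1 := hprim r h1 h2
  rw [Fin.sum_univ_eq_sum_range (fun b => ζ ^ (r * b))]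
  have h : ∀ b, ζ ^ (r * b) = (ζ ^ r) ^ b := fun b => by rw [pow_mul]
  simp_rw [h]
  rw [geom_sum_eq hne]
  have : (ζ ^ r) ^ n = 1 := by rw [← pow_mul, mul_comm, pow_mul, hζ, one_pow]
  rw [this]; simp

lemma inj_sum (n : ℕ) (ζ : ℂ) (hζ : ζ ^ n = 1)
    (hprim : ∀ k, 0 < k → k < n → ζ ^ k ≠ 1) :
    ∀ p : ℕ, ∀ m : Fin (p + 1) → ℕ, (∀ j, 1 ≤ m j) → (∑ j, m j = n) →
      ∑ c ∈ Finset.univ.filter (fun c : Fin (p + 1) → Fin n => Function.Injective c),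
          ∏ j, ζ ^ (m j * (c j : ℕ))
        = (-1 : ℂ) ^ p * (Nat.factorial p : ℂ) * n := by
  intro p
  induction p with
  | zero =>
    intro m hm hsum
    have hm0 : m 0 = n := by simpa using hsum
    have h1 : ∀ c : Fin 1 → Fin n, Function.Injective c := by
      intro c a b _; exact Subsingleton.elim a b
    rw [Finset.filter_true_of_mem (fun c _ => h1 c)]
    have h2 : ∀ c : Fin 1 → Fin n, ∏ j, ζ ^ (m j * (c j : ℕ)) = 1 := by
      intro c
      rw [Fin.prod_univ_one, hm0, pow_mul, hζ, one_pow]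
    rw [Finset.sum_congr rfl (fun c _ => h2 c)]
    simp [Fintype.card_fun]
  | succ p ih =>
    intro m hm hsum
    have hsplit : m 0 + ∑ j : Fin (p + 1), m j.succ = n := by
      rw [Fin.sum_univ_succ] at hsum; exact hsum
    have hm0n : m 0 < n := by
      have h1 : p + 1 ≤ ∑ j : Fin (p + 1), m j.succ := by
        calc p + 1 = ∑ _j : Fin (p + 1), 1 := by simp
        _ ≤ _ := Finset.sum_le_sum (fun j _ => hm j.succ)
      omega
    rw [Finset.sum_filter]
    rw [← Equiv.sum_comp (Fin.consEquiv (fun _ => Fin n))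
      (fun c => if Function.Injective c then ∏ j, ζ ^ (m j * (c j : ℕ)) else 0)]
    rw [Fintype.sum_prod_type]
    have key : ∀ (b : Fin n) (c' : Fin (p + 1) → Fin n),
        (if Function.Injective ((Fin.consEquiv (fun _ => Fin n)) (b, c')) then
          ∏ j : Fin (p + 2), ζ ^ (m j * (((Fin.consEquiv (fun _ => Fin n)) (b, c') j : Fin n) : ℕ)) else 0)
        = if Function.Injective c' then
            (if b ∈ Set.range c' then 0 else ζ ^ (m 0 * (b : ℕ))) *
              ∏ j : Fin (p + 1), ζ ^ (m j.succ * ((c' j : Fin n) : ℕ)) else 0 := by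
      intro b c'
      have he : (Fin.consEquiv fun _ => Fin n) (b, c') = Fin.cons b c' := rfl
      simp only [he, Fin.cons_injective_iff, Fin.prod_univ_succ, Fin.cons_zero, Fin.cons_succ]
      by_cases h1 : Function.Injective c' <;> by_cases h2 : b ∈ Set.range c' <;>
        simp [h1, h2]
    simp_rw [key]
    rw [Finset.sum_comm]
    have hb : ∀ c' : Fin (p + 1) → Fin n, Function.Injective c' →
        ∑ b : Fin n, (if b ∈ Set.range c' then 0 else ζ ^ (m 0 * (b : ℕ)))
          = -∑ j, ζ ^ (m 0 * ((c' j : Fin n) : ℕ)) := by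
      intro c' hc'
      have h0 := sum_pow_eq_zero hζ (hm 0) hm0n hprim
      have hsplit2 : ∑ b : Fin n, ζ ^ (m 0 * (b : ℕ))
          = (∑ b : Fin n, if b ∈ Set.range c' then ζ ^ (m 0 * (b : ℕ)) else 0)
            + ∑ b : Fin n, (if b ∈ Set.range c' then 0 else ζ ^ (m 0 * (b : ℕ))) := by
        rw [← Finset.sum_add_distrib]
        refine Finset.sum_congr rfl fun b _ => ?_
        by_cases h : b ∈ Set.range c' <;> simp [h]
      have him : (∑ b : Fin n, if b ∈ Set.range c' then ζ ^ (m 0 * (b : ℕ)) else 0)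
          = ∑ j, ζ ^ (m 0 * ((c' j : Fin n) : ℕ)) := by
        have hmem : ∀ b : Fin n, b ∈ Set.range c' ↔ b ∈ Finset.univ.image c' := by
          intro b; simp
        simp_rw [hmem]
        rw [Finset.sum_ite_mem, Finset.univ_inter, Finset.sum_image (fun x _ y _ h => hc' h)]
      rw [h0, him] at hsplit2
      linear_combination -hsplit2
    calc ∑ c' : Fin (p + 1) → Fin n, ∑ b : Fin n,
          (if Function.Injective c' then
            (if b ∈ Set.range c' then 0 else ζ ^ (m 0 * (b : ℕ))) *
              ∏ j : Fin (p + 1), ζ ^ (m j.succ * ((c' j : Fin n) : ℕ)) else 0)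
        = ∑ c' ∈ Finset.univ.filter (fun c' : Fin (p + 1) → Fin n => Function.Injective c'),
            (-∑ j, ζ ^ (m 0 * ((c' j : Fin n) : ℕ))) *
              ∏ j : Fin (p + 1), ζ ^ (m j.succ * ((c' j : Fin n) : ℕ)) := by
          rw [Finset.sum_filter]
          refine Finset.sum_congr rfl fun c' _ => ?_
          by_cases h1 : Function.Injective c'
          · simp only [h1, if_true, ← Finset.sum_mul, hb c' h1]
          · simp [h1]
      _ = -∑ j : Fin (p + 1),
            ∑ c' ∈ Finset.univ.filter (fun c' : Fin (p + 1) → Fin n => Function.Injective c'),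
              ∏ j' : Fin (p + 1),
                ζ ^ ((m j'.succ + if j' = j then m 0 else 0) * ((c' j' : Fin n) : ℕ)) := by
          have merge : ∀ (j : Fin (p + 1)) (c' : Fin (p + 1) → Fin n),
              ζ ^ (m 0 * ((c' j : Fin n) : ℕ)) *
                  ∏ j' : Fin (p + 1), ζ ^ (m j'.succ * ((c' j' : Fin n) : ℕ))
                = ∏ j' : Fin (p + 1),
                    ζ ^ ((m j'.succ + if j' = j then m 0 else 0) * ((c' j' : Fin n) : ℕ)) := by
            intro j c'
            simp_rw [add_mul, pow_add]
            rw [Finset.prod_mul_distrib]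
            have h2 : ∏ j' : Fin (p + 1),
                ζ ^ ((if j' = j then m 0 else 0) * ((c' j' : Fin n) : ℕ))
                = ζ ^ (m 0 * ((c' j : Fin n) : ℕ)) := by
              rw [Finset.prod_eq_single j]
              · simp
              · intro j' _ hne; simp [hne]
              · simp
            rw [h2, mul_comm]
          simp_rw [neg_mul, Finset.sum_neg_distrib, Finset.sum_mul]
          rw [neg_inj, Finset.sum_comm]
          refine Finset.sum_congr rfl fun j _ => Finset.sum_congr rfl fun c' _ => merge j c'
      _ = (-1 : ℂ) ^ (p + 1) * (Nat.factorial (p + 1) : ℂ) * n := by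
          have hih : ∀ j : Fin (p + 1),
              ∑ c' ∈ Finset.univ.filter (fun c' : Fin (p + 1) → Fin n => Function.Injective c'),
                ∏ j' : Fin (p + 1),
                  ζ ^ ((m j'.succ + if j' = j then m 0 else 0) * ((c' j' : Fin n) : ℕ))
              = (-1 : ℂ) ^ p * (Nat.factorial p : ℂ) * n := by
            intro j
            refine ih (fun j' => m j'.succ + if j' = j then m 0 else 0) (fun j' => ?_) ?_
            · exact le_trans (hm j'.succ) (Nat.le_add_right _ _)
            · rw [Finset.sum_add_distrib, Finset.sum_ite_eq' Finset.univ j (fun _ => m 0)]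
              simp only [Finset.mem_univ, if_true]
              omega
          rw [Finset.sum_congr rfl (fun j _ => hih j), Finset.sum_const, Finset.card_univ,
            Fintype.card_fin, nsmul_eq_mul]
          push_cast [Nat.factorial_succ]
          ring


section Part
variable {n : ℕ}

lemma mem_partitions {P : Finset (Finset (Fin n))} :
    P ∈ partitions n ↔ (∀ B ∈ P, B.Nonempty) ∧ ∀ x : Fin n, ∃! B, B ∈ P ∧ x ∈ B := by
  simp [partitions]

/-- The fiber of `a` over `b`. -/
def fiber (a : Fin n → Fin n) (b : Fin n) : Finset (Fin n) :=
  Finset.univ.filter fun k => a k = b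

lemma mem_fiber {a : Fin n → Fin n} {b k : Fin n} : k ∈ fiber a b ↔ a k = b := by
  simp [fiber]

/-- The kernel partition of a function. -/
def kerp (a : Fin n → Fin n) : Finset (Finset (Fin n)) :=
  (Finset.univ.image a).image (fiber a)

lemma kerp_mem_partitions (a : Fin n → Fin n) : kerp a ∈ partitions n := by
  rw [mem_partitions]
  constructor
  · intro B hB
    rw [kerp, Finset.mem_image] at hB
    obtain ⟨b, hb, rfl⟩ := hB
    rw [Finset.mem_image] at hb
    obtain ⟨k, -, rfl⟩ := hb
    exact ⟨k, mem_fiber.2 rfl⟩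
  · intro x
    refine ⟨fiber a (a x), ⟨?_, mem_fiber.2 rfl⟩, ?_⟩
    · rw [kerp, Finset.mem_image]
      exact ⟨a x, Finset.mem_image_of_mem a (Finset.mem_univ x), rfl⟩
    · rintro B ⟨hB, hxB⟩
      rw [kerp, Finset.mem_image] at hB
      obtain ⟨b, -, rfl⟩ := hB
      rw [mem_fiber] at hxB
      rw [hxB]

lemma kerp_const_on {a : Fin n → Fin n} {B : Finset (Fin n)} (hB : B ∈ kerp a)
    {x y : Fin n} (hx : x ∈ B) (hy : y ∈ B) : a x = a y := by
  rw [kerp, Finset.mem_image] at hB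
  obtain ⟨b, -, rfl⟩ := hB
  rw [mem_fiber] at hx hy
  rw [hx, hy]

/-- The block of `P` containing `x`. -/
def blk {P : Finset (Finset (Fin n))} (hP : P ∈ partitions n) (x : Fin n) :
    Finset (Fin n) :=
  Finset.choose (fun B => x ∈ B) P ((mem_partitions.1 hP).2 x)

lemma blk_mem {P : Finset (Finset (Fin n))} (hP : P ∈ partitions n) (x : Fin n) :
    blk hP x ∈ P := Finset.choose_mem _ _ _

lemma mem_blk {P : Finset (Finset (Fin n))} (hP : P ∈ partitions n) (x : Fin n) :
    x ∈ blk hP x := Finset.choose_property (fun B => x ∈ B) P _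

lemma blk_eq {P : Finset (Finset (Fin n))} (hP : P ∈ partitions n) {x : Fin n}
    {B : Finset (Fin n)} (hB : B ∈ P) (hx : x ∈ B) : blk hP x = B :=
  ExistsUnique.unique ((mem_partitions.1 hP).2 x) ⟨blk_mem hP x, mem_blk hP x⟩ ⟨hB, hx⟩

lemma sum_partition {M : Type*} [AddCommMonoid M] {P : Finset (Finset (Fin n))}
    (hP : P ∈ partitions n) (g : Fin n → M) :
    ∑ x : Fin n, g x = ∑ B ∈ P, ∑ x ∈ B, g x := by
  have hcover : Finset.univ = P.biUnion id := by
    ext x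
    simp only [Finset.mem_univ, Finset.mem_biUnion, id, true_iff]
    exact ⟨blk hP x, blk_mem hP x, mem_blk hP x⟩
  have hdisj : Set.PairwiseDisjoint (↑P) (id : Finset (Fin n) → Finset (Fin n)) := by
    intro B hB B' hB' hne
    simp only [Function.onFun, id]
    rw [Finset.disjoint_left]
    intro x hx hx'
    exact hne ((blk_eq hP hB hx).symm.trans (blk_eq hP hB' hx'))
  rw [hcover, Finset.sum_biUnion hdisj]
  rfl

lemma prod_fiber_eq_prod_kerp {M : Type*} [CommMonoid M] (a : Fin n → Fin n)
    (G : Finset (Fin n) → M) (hG : G ∅ = 1) :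
    ∏ b : Fin n, G (fiber a b) = ∏ B ∈ kerp a, G B := by
  rw [kerp, Finset.prod_image]
  · rw [← Finset.prod_filter_mul_prod_filter_not Finset.univ (· ∈ Finset.univ.image a)
      (fun b => G (fiber a b))]
    have h1 : ∀ b ∈ Finset.univ.filter (· ∉ Finset.univ.image a), G (fiber a b) = 1 := by
      intro b hb
      rw [Finset.mem_filter] at hb
      have : fiber a b = ∅ := by
        rw [Finset.eq_empty_iff_forall_notMem]
        intro k hk
        exact hb.2 (Finset.mem_image.2 ⟨k, Finset.mem_univ k, mem_fiber.1 hk⟩)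
      rw [this, hG]
    rw [Finset.prod_congr rfl h1, Finset.prod_const_one, mul_one]
    refine (Finset.prod_congr ?_ fun _ _ => rfl).symm
    ext b; simp
  · intro b hb b' hb' hff
    rw [Finset.mem_coe, Finset.mem_image] at hb
    obtain ⟨k, -, rfl⟩ := hb
    have : k ∈ fiber a (a k) := mem_fiber.2 rfl
    rw [hff] at this
    exact mem_fiber.1 this

lemma inj_sum' (n : ℕ) (ζ : ℂ) (hζ : ζ ^ n = 1)
    (hprim : ∀ k, 0 < k → k < n → ζ ^ k ≠ 1) (q : ℕ) (hq : 1 ≤ q)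
    (m : Fin q → ℕ) (hm : ∀ j, 1 ≤ m j) (hsum : ∑ j, m j = n) :
    ∑ c ∈ Finset.univ.filter (fun c : Fin q → Fin n => Function.Injective c),
        ∏ j, ζ ^ (m j * (c j : ℕ))
      = (-1 : ℂ) ^ (q - 1) * (Nat.factorial (q - 1) : ℂ) * n := by
  obtain ⟨p, rfl⟩ : ∃ p, q = p + 1 := ⟨q - 1, (Nat.succ_pred_eq_of_pos hq).symm⟩
  simpa using inj_sum n ζ hζ hprim p m hm hsum

lemma class_sum (hn : 1 ≤ n) {P : Finset (Finset (Fin n))} (hP : P ∈ partitions n)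
    (ζ : ℂ) (hζ : ζ ^ n = 1) (hprim : ∀ k, 0 < k → k < n → ζ ^ k ≠ 1) :
    ∑ a ∈ Finset.univ.filter (fun a : Fin n → Fin n => kerp a = P),
        ζ ^ (∑ k, ((a k : Fin n) : ℕ))
      = (-1 : ℂ) ^ (P.card - 1) * (Nat.factorial (P.card - 1) : ℂ) * n := by
  classical
  have hP1 := (mem_partitions.1 hP).1
  set e := P.equivFin with he
  set rep : {B // B ∈ P} → Fin n := fun B => (hP1 B.1 B.2).choose with hrepdef
  have hrep : ∀ B : {B // B ∈ P}, rep B ∈ B.1 := fun B => (hP1 B.1 B.2).choose_spec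
  set m : Fin P.card → ℕ := fun j => (e.symm j).1.card with hm
  set Φ : (Fin n → Fin n) → (Fin P.card → Fin n) := fun a j => a (rep (e.symm j)) with hΦ
  set Ψ : (Fin P.card → Fin n) → (Fin n → Fin n) :=
    fun c x => c (e ⟨blk hP x, blk_mem hP x⟩) with hΨ
  -- blocks of the kernel of a are fibers
  have hfib : ∀ a : Fin n → Fin n, kerp a = P → ∀ x : Fin n, blk hP x = fiber a (a x) := by
    intro a ha x
    have h1 : fiber a (a x) ∈ P := by
      rw [← ha, kerp, Finset.mem_image]
      exact ⟨a x, Finset.mem_image_of_mem a (Finset.mem_univ x), rfl⟩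
    exact blk_eq hP h1 (mem_fiber.2 rfl)
  have blk_rep : ∀ B : {B // B ∈ P}, blk hP (rep B) = B.1 :=
    fun B => blk_eq hP B.2 (hrep B)
  have hPpos : 1 ≤ P.card :=
    Finset.card_pos.2 ⟨blk hP ⟨0, hn⟩, blk_mem hP ⟨0, hn⟩⟩
  rw [Finset.sum_nbij' Φ Ψ ?_ ?_ ?_ ?_ ?_]
  · exact inj_sum' n ζ hζ hprim P.card hPpos m
      (fun j => Finset.card_pos.2 (hP1 _ (e.symm j).2))
      (by
        have h1 : ∑ j, m j = ∑ B ∈ P, B.card :=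
          calc ∑ j, m j = ∑ B : {B // B ∈ P}, B.1.card :=
                Equiv.sum_comp e.symm (fun B : {B // B ∈ P} => B.1.card)
            _ = ∑ B ∈ P, B.card := Finset.sum_coe_sort P Finset.card
        have h3 := sum_partition hP (fun _ => (1 : ℕ))
        simp only [Finset.sum_const, smul_eq_mul, mul_one, Finset.card_univ,
          Fintype.card_fin] at h3
        rw [h1, ← h3])
  · -- Φ maps into injective functions
    intro a ha
    rw [Finset.mem_filter] at ha ⊢
    refine ⟨Finset.mem_univ _, ?_⟩
    intro j j' hjj
    have h1 : blk hP (rep (e.symm j)) = blk hP (rep (e.symm j')) := by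
      rw [hfib a ha.2, hfib a ha.2]
      simp only [hΦ] at hjj
      rw [hjj]
    rw [blk_rep, blk_rep] at h1
    exact e.symm.injective (Subtype.ext h1)
  · -- Ψ maps into kernel class
    intro c hc
    rw [Finset.mem_filter] at hc ⊢
    refine ⟨Finset.mem_univ _, ?_⟩
    have hfib2 : ∀ x : Fin n, fiber (Ψ c) (Ψ c x) = blk hP x := by
      intro x
      ext y
      rw [mem_fiber]
      constructor
      · intro hy
        have h1 : blk hP y = blk hP x := by
          have := hc.2 hy
          have h2 := e.injective this
          exact congrArg Subtype.val h2
        rw [← h1]; exact mem_blk hP y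
      · intro hy
        have h1 : blk hP y = blk hP x := blk_eq hP (blk_mem hP x) hy
        simp only [hΨ]
        congr 2
        exact Subtype.ext h1
    ext B
    constructor
    · intro hB
      rw [kerp, Finset.mem_image] at hB
      obtain ⟨b, hb, rfl⟩ := hB
      rw [Finset.mem_image] at hb
      obtain ⟨x, -, rfl⟩ := hb
      rw [hfib2 x]
      exact blk_mem hP x
    · intro hB
      have hx := hrep ⟨B, hB⟩
      have h1 : blk hP (rep ⟨B, hB⟩) = B := blk_rep ⟨B, hB⟩
      rw [kerp, Finset.mem_image]
      refine ⟨Ψ c (rep ⟨B, hB⟩), ?_, by rw [hfib2, h1]⟩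
      exact Finset.mem_image_of_mem _ (Finset.mem_univ _)
  · -- left inverse
    intro a ha
    rw [Finset.mem_filter] at ha
    funext x
    simp only [hΨ, hΦ, Equiv.symm_apply_apply]
    have h1 : blk hP x ∈ kerp a := by rw [ha.2]; exact blk_mem hP x
    exact kerp_const_on h1 (hrep ⟨blk hP x, blk_mem hP x⟩) (mem_blk hP x)
  · -- right inverse
    intro c hc
    funext j
    simp only [hΨ, hΦ]
    have h1 : (⟨blk hP (rep (e.symm j)), blk_mem hP _⟩ : {B // B ∈ P}) = e.symm j :=
      Subtype.ext (blk_rep (e.symm j))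
    rw [h1, Equiv.apply_symm_apply]
  · -- weights agree
    intro a ha
    rw [Finset.mem_filter] at ha
    rw [Finset.prod_pow_eq_pow_sum]
    congr 1
    rw [sum_partition hP (fun x => ((a x : Fin n) : ℕ))]
    have h4 : ∀ B : {B // B ∈ P},
        ∑ x ∈ B.1, ((a x : Fin n) : ℕ) = B.1.card * ((a (rep B) : Fin n) : ℕ) := by
      intro B
      have hconst : ∀ x ∈ B.1, ((a x : Fin n) : ℕ) = ((a (rep B) : Fin n) : ℕ) := by
        intro x hx
        have h1 : B.1 ∈ kerp a := by rw [ha.2]; exact B.2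
        exact congrArg Fin.val (kerp_const_on h1 hx (hrep B))
      rw [Finset.sum_congr rfl hconst, Finset.sum_const, smul_eq_mul]
    calc ∑ B ∈ P, ∑ x ∈ B, ((a x : Fin n) : ℕ)
        = ∑ B : {B // B ∈ P}, ∑ x ∈ B.1, ((a x : Fin n) : ℕ) :=
          (Finset.sum_coe_sort P (fun B => ∑ x ∈ B, ((a x : Fin n) : ℕ))).symm
      _ = ∑ B : {B // B ∈ P}, B.1.card * ((a (rep B) : Fin n) : ℕ) :=
          Finset.sum_congr rfl (fun B _ => h4 B)
      _ = ∑ j, m j * ((Φ a j : Fin n) : ℕ) :=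
          (Equiv.sum_comp e.symm
            (fun B : {B // B ∈ P} => B.1.card * ((a (rep B) : Fin n) : ℕ))).symm

end Part

section Analytic
variable {d : ℕ} {Λ : Finset (Site d)} {β : ℝ}

lemma Z_pos (Λ : Finset (Site d)) (β : ℝ) : 0 < Z Λ β := by
  have h1 : ∃ σ : Config Λ, PlusBC σ := by
    refine ⟨fun _ => ⟨1, by simp⟩, fun i h _ => rfl⟩
  obtain ⟨σ₀, hσ₀⟩ := h1
  refine Finset.sum_pos' (fun σ _ => ?_) ⟨σ₀, Finset.mem_univ _, ?_⟩
  · by_cases h : PlusBC σ <;> simp [h, le_of_lt (Real.exp_pos _)]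
  · simp [hσ₀, Real.exp_pos]

lemma gibbsExp_one (Λ : Finset (Site d)) (β : ℝ) :
    gibbsExp Λ β (fun _ => 1) = 1 := by
  rw [gibbsExp]
  simp only [one_mul]
  rw [← Z]
  exact inv_mul_cancel₀ (ne_of_gt (Z_pos Λ β))

/-- The replica expectation of a product over replicas factorizes. -/
lemma rExp_factor (Λ : Finset (Site d)) (β : ℝ) (n : ℕ) (f : Fin n → Config Λ → ℝ) :
    rExp Λ β n (fun σv => ∏ b, ((f b (comp σv b) : ℝ) : ℂ))
      = ∏ b, ((gibbsExp Λ β (f b) : ℝ) : ℂ) := by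
  rw [rExp]
  set h : Fin n → Config Λ → ℂ := fun b σ =>
    if PlusBC σ then ((f b σ : ℝ) : ℂ) * Complex.exp (-(β : ℂ) * (HΛ σ : ℂ)) else 0 with hh
  have key : ∀ σv : RConfig Λ n,
      (if RPlusBC σv then (∏ b, ((f b (comp σv b) : ℝ) : ℂ)) *
        Complex.exp (-(β : ℂ) * (Hrep σv : ℂ)) else 0)
      = ∏ b, h b (comp σv b) := by
    intro σv
    have hexp : Complex.exp (-(β : ℂ) * (Hrep σv : ℂ))
        = ∏ b, Complex.exp (-(β : ℂ) * (HΛ (comp σv b) : ℂ)) := by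
      rw [← Complex.exp_sum]
      congr 1
      rw [Hrep]
      push_cast
      rw [Finset.mul_sum]
    by_cases hP : RPlusBC σv
    · rw [if_pos hP, hexp, ← Finset.prod_mul_distrib]
      refine Finset.prod_congr rfl fun b _ => ?_
      simp [hh, hP b]
    · rw [if_neg hP]
      rw [RPlusBC] at hP
      push_neg at hP
      obtain ⟨b, hb⟩ := hP
      exact (Finset.prod_eq_zero (Finset.mem_univ b) (by simp [hh, hb])).symm
  rw [Finset.sum_congr rfl (fun σv _ => key σv)]
  -- reindex by currying
  let e : (Fin n → Config Λ) ≃ RConfig Λ n :=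
    ⟨fun g i b => g b i, fun σv b i => σv i b, fun _ => rfl, fun _ => rfl⟩
  rw [← Equiv.sum_comp e (fun σv => ∏ b, h b (comp σv b))]
  have hcomp : ∀ (g : Fin n → Config Λ) (b : Fin n), comp (e g) b = g b := by
    intro g b; rfl
  simp_rw [hcomp]
  rw [← Fintype.piFinset_univ, ← Finset.prod_univ_sum]
  have hZ : ((Z Λ β ^ n : ℝ) : ℂ)⁻¹ = ∏ _b : Fin n, ((Z Λ β : ℝ) : ℂ)⁻¹ := by
    rw [Finset.prod_const]
    push_cast
    rw [Finset.card_univ, Fintype.card_fin, inv_pow]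
  rw [hZ, ← Finset.prod_mul_distrib]
  refine Finset.prod_congr rfl fun b _ => ?_
  rw [gibbsExp]
  push_cast [apply_ite (Complex.ofReal), Complex.ofReal_exp, hh]
  norm_num

lemma rExp_sum {ι : Type*} (s : Finset ι) (n : ℕ) (F : ι → RConfig Λ n → ℂ) :
    rExp Λ β n (fun σv => ∑ x ∈ s, F x σv) = ∑ x ∈ s, rExp Λ β n (F x) := by
  simp only [rExp]
  rw [← Finset.mul_sum, Finset.sum_comm]
  congr 1
  refine Finset.sum_congr rfl fun σv _ => ?_
  by_cases h : RPlusBC σv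
  · simp [h, Finset.sum_mul]
  · simp [h]

lemma rExp_const_mul (n : ℕ) (c : ℂ) (F : RConfig Λ n → ℂ) :
    rExp Λ β n (fun σv => c * F σv) = c * rExp Λ β n F := by
  simp only [rExp]
  have hpt : ∀ σv : RConfig Λ n,
      (if RPlusBC σv then c * F σv * Complex.exp (-(β:ℂ) * (Hrep σv : ℂ)) else 0)
      = c * (if RPlusBC σv then F σv * Complex.exp (-(β:ℂ) * (Hrep σv : ℂ)) else 0) := by
    intro σv
    by_cases h : RPlusBC σv
    · simp only [h, if_true]; ring
    · simp [h]
  rw [Finset.sum_congr rfl (fun σv _ => hpt σv), ← Finset.mul_sum]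
  ring

lemma rootn_pow_gamma_pow_n (n γ : ℕ) (hn : 1 ≤ n) :
    (rootn n ^ γ) ^ n = 1 := by
  have hroot : IsPrimitiveRoot (rootn n) n :=
    Complex.isPrimitiveRoot_exp n (by omega)
  rw [← pow_mul, mul_comm, pow_mul, hroot.pow_eq_one, one_pow]

lemma rootn_pow_gamma_prim (n γ : ℕ) (hn : 1 ≤ n) (hgcd : Nat.gcd n γ = 1) :
    ∀ k, 0 < k → k < n → (rootn n ^ γ) ^ k ≠ 1 := by
  intro k hk1 hk2 hcon
  have hroot : IsPrimitiveRoot (rootn n) n :=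
    Complex.isPrimitiveRoot_exp n (by omega)
  rw [← pow_mul] at hcon
  have hdvd : n ∣ γ * k := (IsPrimitiveRoot.pow_eq_one_iff_dvd hroot _).1 hcon
  have hcop : Nat.Coprime n γ := hgcd
  have h2 : n ∣ k := hcop.dvd_of_dvd_mul_left hdvd
  have := Nat.le_of_dvd hk1 h2
  omega

lemma scalar_identity (n : ℕ) (hn : 1 ≤ n) :
    ((n : ℝ) ^ (((n : ℝ) - 2) / 2)) * ((Real.sqrt n)⁻¹ ^ n * n) = 1 := by
  have hp : (0 : ℝ) < n := by exact_mod_cast hn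
  have h1 : (Real.sqrt n)⁻¹ ^ n = (n:ℝ) ^ (-((n:ℝ)/2)) := by
    rw [inv_pow, Real.sqrt_eq_rpow, ← Real.rpow_natCast ((n:ℝ) ^ ((1:ℝ)/2)) n,
      ← Real.rpow_mul hp.le, ← Real.rpow_neg hp.le]
    congr 1
    ring
  rw [h1]
  have h2 : ((n : ℝ) ^ (((n : ℝ) - 2) / 2)) * ((n:ℝ) ^ (-((n:ℝ)/2)) * n)
      = (n:ℝ) ^ ((((n : ℝ) - 2) / 2) + (-((n:ℝ)/2)) + 1) := by
    rw [Real.rpow_add hp, Real.rpow_add hp, Real.rpow_one, mul_assoc]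
  rw [h2, show (((n : ℝ) - 2) / 2) + (-((n:ℝ)/2)) + 1 = 0 by ring, Real.rpow_zero]

end Analytic
end Aux

/-- **Replica representation of truncated correlations.** For `γ ∈ {1, …, n}` with
`gcd(n, γ) = 1` and sites `i 0, …, i (n-1) ∈ Λ`,
`⟨σ_{i 0} ⋯ σ_{i (n-1)}⟩^T_{Λ,β} = n^{(n-2)/2} ⟨⟨ s^{(γ)}_{i 0} ⋯ s^{(γ)}_{i (n-1)} ⟩⟩_{Λ,β}`. -/
theorem truncated_correlation_replica_representation (d : ℕ) (hd : 2 ≤ d)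
    (Λ : Finset (Site d)) (β : ℝ) (hβ : 0 < β) (n : ℕ) (hn : 1 ≤ n)
    (γ : ℕ) (hγ1 : 1 ≤ γ) (hγn : γ ≤ n) (hgcd : Nat.gcd n γ = 1)
    (i : Fin n → Site d) (hi : ∀ k, i k ∈ Λ) :
    (truncCorr Λ β i : ℂ) =
      (((n : ℝ) ^ (((n : ℝ) - 2) / 2) : ℝ) : ℂ) *
        rExp Λ β n (fun σv => ∏ k, sVar γ σv (i k)) := by
  classical
  have hn0 : (0:ℕ) < n := hn
  set ζ : ℂ := rootn n ^ γ with hζdef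
  have hζn : ζ ^ n = 1 := rootn_pow_gamma_pow_n n γ hn
  have hprim : ∀ k, 0 < k → k < n → ζ ^ k ≠ 1 := rootn_pow_gamma_prim n γ hn hgcd
  have hGempty : ((gibbsExp Λ β fun σ => ∏ k ∈ (∅ : Finset (Fin n)), spin σ (i k) : ℝ) : ℂ)
      = 1 := by
    have h1 : (fun σ : Config Λ => ∏ k ∈ (∅ : Finset (Fin n)), spin σ (i k))
        = fun _ => (1:ℝ) := by funext σ; simp
    rw [h1, gibbsExp_one]
    norm_num
  -- pointwise expansion of the product of s-variables
  have hsVar : ∀ σv : RConfig Λ n, (∏ k, sVar γ σv (i k))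
      = ∑ a : Fin n → Fin n, (((Real.sqrt n : ℂ)⁻¹ ^ n * ζ ^ (∑ k, ((a k : Fin n) : ℕ))) *
          ∏ b : Fin n, ((∏ k ∈ fiber a b, spin (comp σv b) (i k) : ℝ) : ℂ)) := by
    intro σv
    calc ∏ k, sVar γ σv (i k)
        = ∏ k : Fin n, ((Real.sqrt n : ℂ)⁻¹ *
            ∑ α : Fin n, ζ ^ ((α : Fin n) : ℕ) * (rspin σv α (i k) : ℂ)) := by
          refine Finset.prod_congr rfl fun k _ => ?_
          rw [sVar]
          congr 1
          refine Finset.sum_congr rfl fun α _ => ?_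
          rw [hζdef, ← pow_mul]
      _ = (Real.sqrt n : ℂ)⁻¹ ^ n *
            ∏ k : Fin n, ∑ α : Fin n, ζ ^ ((α : Fin n) : ℕ) * (rspin σv α (i k) : ℂ) := by
          rw [Finset.prod_mul_distrib, Finset.prod_const, Finset.card_univ, Fintype.card_fin]
      _ = (Real.sqrt n : ℂ)⁻¹ ^ n * ∑ a : Fin n → Fin n,
            ∏ k, (ζ ^ ((a k : Fin n) : ℕ) * (rspin σv (a k) (i k) : ℂ)) := by
          rw [Finset.prod_univ_sum, Fintype.piFinset_univ]
      _ = ∑ a : Fin n → Fin n, (((Real.sqrt n : ℂ)⁻¹ ^ n * ζ ^ (∑ k, ((a k : Fin n) : ℕ))) *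
            ∏ b : Fin n, ((∏ k ∈ fiber a b, spin (comp σv b) (i k) : ℝ) : ℂ)) := by
          rw [Finset.mul_sum]
          refine Finset.sum_congr rfl fun a _ => ?_
          rw [Finset.prod_mul_distrib, Finset.prod_pow_eq_pow_sum]
          have hgroup : ∏ k : Fin n, (rspin σv (a k) (i k) : ℂ)
              = ∏ b : Fin n, ((∏ k ∈ fiber a b, spin (comp σv b) (i k) : ℝ) : ℂ) := by
            rw [← Finset.prod_fiberwise_of_maps_to (g := a)
              (fun k _ => Finset.mem_univ (a k)) (fun k => (rspin σv (a k) (i k) : ℂ))]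
            refine Finset.prod_congr rfl fun b _ => ?_
            push_cast
            rw [show Finset.univ.filter (fun k => a k = b) = fiber a b from rfl]
            refine Finset.prod_congr rfl fun k hk => ?_
            rw [rspin, mem_fiber.1 hk]
          rw [hgroup]
          ring
  -- the replica expectation in factorized form
  have h0 : rExp Λ β n (fun σv => ∏ k, sVar γ σv (i k))
      = ∑ a : Fin n → Fin n, (((Real.sqrt n : ℂ)⁻¹ ^ n * ζ ^ (∑ k, ((a k : Fin n) : ℕ))) *
          ∏ B ∈ kerp a, ((gibbsExp Λ β fun σ => ∏ k ∈ B, spin σ (i k) : ℝ) : ℂ)) := by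
    rw [show (fun σv : RConfig Λ n => ∏ k, sVar γ σv (i k))
        = fun σv => ∑ a : Fin n → Fin n,
            (((Real.sqrt n : ℂ)⁻¹ ^ n * ζ ^ (∑ k, ((a k : Fin n) : ℕ))) *
              ∏ b : Fin n, ((∏ k ∈ fiber a b, spin (comp σv b) (i k) : ℝ) : ℂ))
      from funext hsVar]
    rw [rExp_sum]
    refine Finset.sum_congr rfl fun a _ => ?_
    rw [rExp_const_mul]
    congr 1
    rw [rExp_factor Λ β n (fun b σ => ∏ k ∈ fiber a b, spin σ (i k))]
    exact prod_fiber_eq_prod_kerp a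
      (fun S => ((gibbsExp Λ β fun σ => ∏ k ∈ S, spin σ (i k) : ℝ) : ℂ)) hGempty
  -- group by the kernel partition
  have h1 : rExp Λ β n (fun σv => ∏ k, sVar γ σv (i k))
      = ((Real.sqrt n : ℂ)⁻¹ ^ n * (n : ℂ)) * ∑ P ∈ partitions n,
          (-1 : ℂ) ^ (P.card - 1) * (Nat.factorial (P.card - 1) : ℂ) *
            ∏ B ∈ P, ((gibbsExp Λ β fun σ => ∏ k ∈ B, spin σ (i k) : ℝ) : ℂ) := by
    rw [h0, ← Finset.sum_fiberwise_of_maps_to (g := kerp)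
      (fun a _ => kerp_mem_partitions a)
      (fun a => (((Real.sqrt n : ℂ)⁻¹ ^ n * ζ ^ (∑ k, ((a k : Fin n) : ℕ))) *
        ∏ B ∈ kerp a, ((gibbsExp Λ β fun σ => ∏ k ∈ B, spin σ (i k) : ℝ) : ℂ)))]
    rw [Finset.mul_sum]
    refine Finset.sum_congr rfl fun P hP => ?_
    have hclass : ∀ a ∈ Finset.univ.filter (fun a : Fin n → Fin n => kerp a = P),
        (((Real.sqrt n : ℂ)⁻¹ ^ n * ζ ^ (∑ k, ((a k : Fin n) : ℕ))) *
          ∏ B ∈ kerp a, ((gibbsExp Λ β fun σ => ∏ k ∈ B, spin σ (i k) : ℝ) : ℂ))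
        = ζ ^ (∑ k, ((a k : Fin n) : ℕ)) * ((Real.sqrt n : ℂ)⁻¹ ^ n *
            ∏ B ∈ P, ((gibbsExp Λ β fun σ => ∏ k ∈ B, spin σ (i k) : ℝ) : ℂ)) := by
      intro a ha
      rw [(Finset.mem_filter.1 ha).2]
      ring
    rw [Finset.sum_congr rfl hclass, ← Finset.sum_mul,
      class_sum hn hP ζ hζn hprim]
    ring
  rw [h1, truncCorr]
  push_cast
  rw [← mul_assoc]
  have hscalar : (((n : ℝ) ^ (((n : ℝ) - 2) / 2) : ℝ) : ℂ) *
      ((Real.sqrt n : ℂ)⁻¹ ^ n * (n : ℂ)) = 1 := by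
    have hs := scalar_identity n hn
    have hs2 := congrArg (fun x : ℝ => (x : ℂ)) hs
    push_cast at hs2
    rw [← hs2]
  rw [hscalar, one_mul]

end IsingReplica
end
end

section
/- Vanishing lemma for s-correlations: Let k ≥ 1 and γ ∈ {1,…,n} be such that kγ ≢ 0 (mod n). Then for any sites i₁, …, i_k ∈ Λ, the replica expectation vanishes: ⟨⟨ s^{(γ)}_{i₁} s^{(γ)}_{i₂} ⋯ s^{(γ)}_{i_k} ⟩⟩_{Λ,β} = 0. -/
open scoped BigOperators Classical
noncomputable section

namespace IsingReplica

lemma rootn_pow_n {n : ℕ} (hn : n ≠ 0) : rootn n ^ n = 1 :=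
  (Complex.isPrimitiveRoot_exp n hn).pow_eq_one

lemma rootn_pow_mod {n : ℕ} (hn : n ≠ 0) (m : ℕ) : rootn n ^ m = rootn n ^ (m % n) := by
  conv_lhs => rw [← Nat.div_add_mod m n]
  rw [pow_add, pow_mul, rootn_pow_n hn, one_pow, one_mul]

/-- **Vanishing lemma for `s`-correlations.** If `k ≥ 1`, `γ ∈ {1, …, n}` and
`kγ ≢ 0 (mod n)`, then `⟨⟨ s^{(γ)}_{i 0} ⋯ s^{(γ)}_{i (k-1)} ⟩⟩_{Λ,β} = 0`. -/
theorem vanishing_s_correlations (d : ℕ) (hd : 2 ≤ d)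
    (Λ : Finset (Site d)) (β : ℝ) (hβ : 0 < β) (n : ℕ) (hn : 1 ≤ n)
    (k : ℕ) (hk : 1 ≤ k) (γ : ℕ) (hγ1 : 1 ≤ γ) (hγn : γ ≤ n)
    (hmod : ¬ n ∣ k * γ) (i : Fin k → Site d) (hi : ∀ m, i m ∈ Λ) :
    rExp Λ β n (fun σv => ∏ m, sVar γ σv (i m)) = 0 := by
  haveI : NeZero n := ⟨by omega⟩
  have hn0 : n ≠ 0 := by omega
  set ω : ℂ := rootn n with hω
  -- the cyclic shift of the replica index
  let e : Equiv.Perm (Fin n) := Equiv.addRight (1 : Fin n)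
  let T : RConfig Λ n ≃ RConfig Λ n :=
    Equiv.arrowCongr (Equiv.refl _) (Equiv.arrowCongr e.symm (Equiv.refl SpinVal))
  have hT : ∀ (σv : RConfig Λ n) x a, T σv x a = σv x (e a) := by
    intro σv x a
    simp [T, Equiv.arrowCongr]
  have hcomp : ∀ (σv : RConfig Λ n) a, comp (T σv) a = comp σv (e a) := by
    intro σv a; funext x; simp [comp, hT]
  have hH : ∀ σv : RConfig Λ n, Hrep (T σv) = Hrep σv := by
    intro σv
    unfold Hrep
    simp only [hcomp]
    exact Equiv.sum_comp e fun a => HΛ (comp σv a)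
  have hBC : ∀ σv : RConfig Λ n, RPlusBC (T σv) ↔ RPlusBC σv := by
    intro σv
    constructor
    · intro h a
      have := h (e.symm a)
      rwa [hcomp, Equiv.apply_symm_apply] at this
    · intro h a; rw [hcomp]; exact h (e a)
  -- val of e a
  have hea : ∀ a : Fin n, ((e a : Fin n) : ℕ) = ((a : ℕ) + 1) % n := by
    intro a
    show ((a + 1 : Fin n) : ℕ) = ((a : ℕ) + 1) % n
    rw [Fin.val_add, Fin.val_one', Nat.add_mod, Nat.mod_mod_of_dvd _ dvd_rfl,
      ← Nat.add_mod]
  -- equivariance of sVar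
  have hpow : ∀ a : Fin n, ω ^ γ * ω ^ (γ * (a : ℕ)) = ω ^ (γ * ((e a : Fin n) : ℕ)) := by
    intro a
    rw [← pow_add, hea a, hω, rootn_pow_mod hn0 (γ + γ * (a : ℕ)),
      rootn_pow_mod hn0 (γ * (((a : ℕ) + 1) % n))]
    congr 1
    conv_rhs => rw [Nat.mul_mod, Nat.mod_mod_of_dvd _ dvd_rfl, ← Nat.mul_mod]
    rw [Nat.mul_add, Nat.mul_one, Nat.add_comm]
  have hsVar : ∀ (σv : RConfig Λ n) (j : Site d),
      sVar γ σv j = ω ^ γ * sVar (n := n) γ (T σv) j := by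
    intro σv j
    unfold sVar
    rw [← mul_assoc, mul_comm (ω ^ γ) (((Real.sqrt n : ℝ) : ℂ))⁻¹, mul_assoc]
    congr 1
    rw [Finset.mul_sum]
    rw [← Equiv.sum_comp e fun a => rootn n ^ (γ * (a : ℕ)) * ((rspin σv a j : ℝ) : ℂ)]
    apply Finset.sum_congr rfl
    intro a _
    have hr : rspin (T σv) a j = rspin σv (e a) j := by
      unfold rspin; rw [hcomp]
    rw [hr, ← mul_assoc, ← hω, hpow a]
  -- equivariance of the product
  have hF : ∀ σv : RConfig Λ n,
      (∏ m, sVar γ σv (i m)) = ω ^ (k * γ) * ∏ m, sVar (n := n) γ (T σv) (i m) := by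
    intro σv
    calc (∏ m, sVar γ σv (i m))
        = ∏ m : Fin k, ω ^ γ * sVar (n := n) γ (T σv) (i m) :=
          Finset.prod_congr rfl fun m _ => hsVar σv (i m)
      _ = (ω ^ γ) ^ k * ∏ m, sVar (n := n) γ (T σv) (i m) := by
          rw [Finset.prod_mul_distrib, Finset.prod_const, Finset.card_univ, Fintype.card_fin]
      _ = ω ^ (k * γ) * ∏ m, sVar (n := n) γ (T σv) (i m) := by
          rw [← pow_mul, Nat.mul_comm]
  -- the key symmetry identity for the partition sum
  set c : ℂ := ω ^ (k * γ) with hc'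
  have hc : c ≠ 1 := fun h =>
    hmod (((Complex.isPrimitiveRoot_exp n hn0).pow_eq_one_iff_dvd (k * γ)).mp h)
  set S : ℂ := ∑ σv : RConfig Λ n,
      if RPlusBC σv then (∏ m, sVar γ σv (i m)) * Complex.exp (-(β : ℂ) * (Hrep σv : ℂ))
      else 0 with hS
  have key : S = c * S := by
    calc S = ∑ σv : RConfig Λ n,
          if RPlusBC σv then
            c * ((∏ m, sVar (n := n) γ (T σv) (i m)) *
              Complex.exp (-(β : ℂ) * ((Hrep (T σv) : ℝ) : ℂ)))
          else 0 := by
          apply Finset.sum_congr rfl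
          intro σv _
          rw [hF σv, hH σv, mul_assoc]
      _ = c * ∑ σv : RConfig Λ n,
          if RPlusBC (T σv) then
            (∏ m, sVar (n := n) γ (T σv) (i m)) *
              Complex.exp (-(β : ℂ) * ((Hrep (T σv) : ℝ) : ℂ))
          else 0 := by
          rw [Finset.mul_sum]
          apply Finset.sum_congr rfl
          intro σv _
          rw [hBC σv]
          split
          · rfl
          · rw [mul_zero]
      _ = c * S := by
          congr 1
          rw [hS]
          exact Equiv.sum_comp T fun σv =>
            if RPlusBC σv then
              (∏ m, sVar γ σv (i m)) * Complex.exp (-(β : ℂ) * (Hrep σv : ℂ))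
            else 0
  have hS0 : S = 0 := by
    have h1 : (1 - c) * S = 0 := by rw [sub_mul, one_mul, ← key, sub_self]
    rcases mul_eq_zero.mp h1 with h | h
    · exact absurd (sub_eq_zero.mp h).symm hc
    · exact h
  unfold rExp
  rw [← hS, hS0, mul_zero]
end IsingReplica
end
end

section
/- Cancellation lemma (condensation mechanism): Let σ⃗ be an n-replica configuration with +1 boundary conditions, let 𝒦 ∈ 𝒦(σ⃗) be a continent of σ⃗, and let i₁, …, iₙ ∈ Λ be sites such that the number l of indices k with i_k ∈ 𝒦 satisfies 1 ≤ l < n. Then Σ_{k=0}^{n−1} s^{(1)}_{i₁}(π_𝒦^k σ⃗) ⋯ s^{(1)}_{iₙ}(π_𝒦^k σ⃗) · e^{−β H_rep(π_𝒦^k σ⃗)} = 0, where π_𝒦^k denotes the local cyclic replica transformation π_𝒦 applied k times. -/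
open scoped BigOperators Classical
noncomputable section

namespace IsingReplica

section CancelAux

variable {d n : ℕ} {Λ : Finset (Site d)}

lemma nn_symm {i j : Site d} (h : nn i j) : nn j i := by
  unfold nn at h ⊢
  simpa [abs_sub_comm] using h

/-- The shift element `n-1` of `Fin n`. -/
def csh (n : ℕ) [NeZero n] : Fin n :=
  ⟨n - 1, Nat.sub_lt (Nat.pos_of_ne_zero (NeZero.ne n)) one_pos⟩

lemma idx_eq [NeZero n] (a : Fin n) :
    (⟨((a : ℕ) + n - 1) % n, Nat.mod_lt _ a.pos⟩ : Fin n) = a + csh n := by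
  have hn : 0 < n := Nat.pos_of_ne_zero (NeZero.ne n)
  apply Fin.ext
  simp only [Fin.add_def, csh]
  congr 1
  omega

lemma spin_piK [NeZero n] (K : Finset (Site d)) (τ : RConfig Λ n) (a : Fin n) (j : Site d) :
    spin (comp (piK K τ) a) j =
      if j ∈ K then spin (comp τ (a + csh n)) j else spin (comp τ a) j := by
  by_cases hjK : j ∈ K
  · by_cases hj : j ∈ Λ
    · simp [spin, comp, piK, hj, hjK, idx_eq]
    · simp [spin, hj, hjK]
  · by_cases hj : j ∈ Λ <;> simp [spin, comp, piK, hj, hjK]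

/-- All replica spins on sites of `Λ \ K` neighboring `K` equal `+1`. -/
def GoodK (K : Finset (Site d)) (τ : RConfig Λ n) : Prop :=
  ∀ j ∈ Λ, j ∉ K → (∃ x ∈ K, nn x j) → ∀ a : Fin n, spin (comp τ a) j = 1

lemma goodK_base (σv : RConfig Λ n) (K : Finset (Site d)) (hK : IsContinent σv K) :
    GoodK K σv := by
  rintro j hjΛ hjK ⟨x, hxK, hxj⟩ a
  have hjsea : j ∈ sea σv := by
    by_contra hns
    have hj' : j ∈ Λ \ sea σv := Finset.mem_sdiff.mpr ⟨hjΛ, hns⟩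
    have hx' : x ∈ Λ \ sea σv := hK.2.1 hxK
    have hc : connIn (Λ \ sea σv) x j := Relation.ReflTransGen.single ⟨hx', hj', hxj⟩
    exact hjK (hK.2.2.2 x hxK j hj' hc)
  have h1 : j ∈ onesSet σv := (Finset.mem_filter.mp hjsea).1
  have h2 := (Finset.mem_filter.mp h1).2
  unfold spin
  rw [dif_pos hjΛ]
  exact_mod_cast h2 hjΛ a

lemma goodK_piK [NeZero n] (K : Finset (Site d)) (τ : RConfig Λ n) (h : GoodK K τ) :
    GoodK K (piK K τ) := by
  intro j hjΛ hjK hex a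
  rw [spin_piK, if_neg hjK]
  exact h j hjΛ hjK hex a

lemma sum_shift [NeZero n] {M : Type*} [AddCommMonoid M] (f : Fin n → M) :
    ∑ a : Fin n, f (a + csh n) = ∑ a : Fin n, f a :=
  Fintype.sum_equiv (Equiv.addRight (csh n)) _ _ (fun _ => rfl)

lemma bond_sum [NeZero n] (K : Finset (Site d)) (τ : RConfig Λ n) (h : GoodK K τ)
    {x y : Site d} (hx : x ∈ Λ) (hy : y ∈ Λ) (hnn : nn x y) :
    ∑ a : Fin n, spin (comp (piK K τ) a) x * spin (comp (piK K τ) a) y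
      = ∑ a : Fin n, spin (comp τ a) x * spin (comp τ a) y := by
  by_cases hxK : x ∈ K <;> by_cases hyK : y ∈ K
  · simp only [spin_piK, if_pos hxK, if_pos hyK]
    exact sum_shift fun a => spin (comp τ a) x * spin (comp τ a) y
  · have hy1 : ∀ a : Fin n, spin (comp τ a) y = 1 := fun a => h y hy hyK ⟨x, hxK, hnn⟩ a
    simp only [spin_piK, if_pos hxK, if_neg hyK, hy1, mul_one]
    exact sum_shift fun a => spin (comp τ a) x
  · have hx1 : ∀ a : Fin n, spin (comp τ a) x = 1 := fun a => h x hx hxK ⟨y, hyK, nn_symm hnn⟩ a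
    simp only [spin_piK, if_neg hxK, if_pos hyK, hx1, one_mul]
    exact sum_shift fun a => spin (comp τ a) y
  · simp only [spin_piK, if_neg hxK, if_neg hyK]

lemma Hrep_eq (ρ : RConfig Λ n) :
    Hrep ρ = (1 / 2) * ∑ i : {x // x ∈ Λ}, ∑ j : {x // x ∈ Λ}, ∑ a : Fin n,
      (if nn i.1 j.1 then 1 - spin (comp ρ a) i.1 * spin (comp ρ a) j.1 else 0) := by
  unfold Hrep HΛ
  rw [← Finset.mul_sum]
  congr 1
  rw [Finset.sum_comm]
  refine Finset.sum_congr rfl fun i _ => ?_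
  rw [Finset.sum_comm]

lemma Hrep_piK [NeZero n] (K : Finset (Site d)) (τ : RConfig Λ n) (h : GoodK K τ) :
    Hrep (piK K τ) = Hrep τ := by
  rw [Hrep_eq, Hrep_eq]
  congr 1
  refine Finset.sum_congr rfl fun i _ => Finset.sum_congr rfl fun j _ => ?_
  by_cases hnn : nn i.1 j.1
  · simp only [if_pos hnn, Finset.sum_sub_distrib]
    congr 1
    exact bond_sum K τ h i.2 j.2 hnn
  · simp [hnn]

lemma pow_mod_eq {ω : ℂ} (hω : ω ^ n = 1) (m : ℕ) : ω ^ (m % n) = ω ^ m := by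
  conv_rhs => rw [← Nat.mod_add_div m n]
  rw [pow_add, pow_mul, hω, one_pow, mul_one]

lemma sVar_piK [NeZero n] (hω : rootn n ^ n = 1) (K : Finset (Site d)) (τ : RConfig Λ n)
    (j : Site d) :
    sVar 1 (piK K τ) j = (if j ∈ K then rootn n else 1) * sVar 1 τ j := by
  have hn : 0 < n := Nat.pos_of_ne_zero (NeZero.ne n)
  unfold sVar rspin
  by_cases hjK : j ∈ K
  · rw [if_pos hjK]
    have h1 : ∀ a : Fin n,
        rootn n ^ (1 * (a : ℕ)) * ((spin (comp (piK K τ) a) j : ℝ) : ℂ)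
          = rootn n * (rootn n ^ (1 * ((a + csh n : Fin n) : ℕ))
              * ((spin (comp τ (a + csh n)) j : ℝ) : ℂ)) := by
      intro a
      rw [spin_piK, if_pos hjK, ← mul_assoc]
      congr 1
      have hval : ((a + csh n : Fin n) : ℕ) = ((a : ℕ) + (n - 1)) % n := by
        simp [Fin.add_def, csh]
      rw [one_mul, one_mul, hval, pow_mod_eq hω, ← pow_succ']
      have h2 : (a : ℕ) + (n - 1) + 1 = (a : ℕ) + n := by omega
      rw [h2, pow_add, hω, mul_one]
    rw [Finset.sum_congr rfl fun a _ => h1 a, ← Finset.mul_sum,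
      sum_shift fun a => rootn n ^ (1 * (a : ℕ)) * ((spin (comp τ a) j : ℝ) : ℂ)]
    ring
  · rw [if_neg hjK, one_mul]
    congr 1
    refine Finset.sum_congr rfl fun a _ => ?_
    rw [spin_piK, if_neg hjK]

end CancelAux

/-- **Cancellation lemma (condensation mechanism).** Let `σ⃗` be an `n`-replica
configuration with `+1` boundary conditions, `𝒦 ∈ 𝒦(σ⃗)` a continent, and
`i 0, …, i (n-1) ∈ Λ` sites such that the number `l` of indices `k` with `i k ∈ 𝒦`
satisfies `1 ≤ l < n`.  Then
`Σ_{k=0}^{n-1} s^{(1)}_{i 0}(π_𝒦^k σ⃗) ⋯ s^{(1)}_{i (n-1)}(π_𝒦^k σ⃗) e^{-β H_rep(π_𝒦^k σ⃗)} = 0`. -/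
theorem cancellation_lemma (d : ℕ) (hd : 2 ≤ d)
    (Λ : Finset (Site d)) (β : ℝ) (hβ : 0 < β) (n : ℕ) (hn : 1 ≤ n)
    (σv : RConfig Λ n) (hbc : RPlusBC σv) (K : Finset (Site d)) (hK : IsContinent σv K)
    (i : Fin n → Site d) (hi : ∀ k, i k ∈ Λ)
    (hl1 : 1 ≤ (Finset.univ.filter fun k => i k ∈ K).card)
    (hln : (Finset.univ.filter fun k => i k ∈ K).card < n) :
    ∑ k ∈ Finset.range n,
      (∏ m, sVar 1 ((piK K)^[k] σv) (i m)) *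
        Complex.exp (-(β : ℂ) * (Hrep ((piK K)^[k] σv) : ℂ)) = 0 := by
  haveI : NeZero n := ⟨by omega⟩
  have hprim := Complex.isPrimitiveRoot_exp n (by omega : n ≠ 0)
  have hω : rootn n ^ n = 1 := by
    have := hprim.pow_eq_one
    simpa [rootn] using this
  -- GoodK is preserved under iterates
  have hgood : ∀ k, GoodK K ((piK K)^[k] σv) := by
    intro k
    induction k with
    | zero => simpa using goodK_base σv K hK
    | succ k ih => rw [Function.iterate_succ_apply']; exact goodK_piK K _ ih
  have hHrep : ∀ k, Hrep ((piK K)^[k] σv) = Hrep σv := by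
    intro k
    induction k with
    | zero => simp
    | succ k ih => rw [Function.iterate_succ_apply', Hrep_piK K _ (hgood k), ih]
  have hsvar : ∀ k (j : Site d), sVar 1 ((piK K)^[k] σv) j
      = (if j ∈ K then rootn n ^ k else 1) * sVar 1 σv j := by
    intro k j
    induction k with
    | zero => simp
    | succ k ih =>
      rw [Function.iterate_succ_apply', sVar_piK hω, ih]
      by_cases hjK : j ∈ K <;> simp [hjK] <;> ring
  set l := (Finset.univ.filter fun k => i k ∈ K).card with hl
  have hprod : ∀ k, (∏ m, sVar 1 ((piK K)^[k] σv) (i m))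
      = (rootn n ^ l) ^ k * ∏ m, sVar 1 σv (i m) := by
    intro k
    calc (∏ m, sVar 1 ((piK K)^[k] σv) (i m))
        = ∏ m, ((if i m ∈ K then rootn n ^ k else 1) * sVar 1 σv (i m)) := by
          exact Finset.prod_congr rfl fun m _ => hsvar k (i m)
      _ = (∏ m, (if i m ∈ K then rootn n ^ k else (1:ℂ))) * ∏ m, sVar 1 σv (i m) := by
          rw [Finset.prod_mul_distrib]
      _ = (rootn n ^ l) ^ k * ∏ m, sVar 1 σv (i m) := by
          rw [Finset.prod_ite, Finset.prod_const, Finset.prod_const_one, mul_one, hl,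
            ← pow_mul, ← pow_mul, Nat.mul_comm]
  have hgeom : ∑ k ∈ Finset.range n, (rootn n ^ l) ^ k = 0 := by
    have hne : rootn n ^ l ≠ 1 := by
      have := hprim.pow_ne_one_of_pos_of_lt (by omega : l ≠ 0) hln
      simpa [rootn] using this
    rw [geom_sum_eq hne, ← pow_mul, Nat.mul_comm, pow_mul, hω, one_pow, sub_self, zero_div]
  calc ∑ k ∈ Finset.range n,
      (∏ m, sVar 1 ((piK K)^[k] σv) (i m)) *
        Complex.exp (-(β : ℂ) * (Hrep ((piK K)^[k] σv) : ℂ))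
      = ∑ k ∈ Finset.range n, (rootn n ^ l) ^ k *
          ((∏ m, sVar 1 σv (i m)) * Complex.exp (-(β : ℂ) * (Hrep σv : ℂ))) := by
        refine Finset.sum_congr rfl fun k _ => ?_
        rw [hprod k, hHrep k, mul_assoc]
    _ = (∑ k ∈ Finset.range n, (rootn n ^ l) ^ k) *
          ((∏ m, sVar 1 σv (i m)) * Complex.exp (-(β : ℂ) * (Hrep σv : ℂ))) := by
        rw [Finset.sum_mul]
    _ = 0 := by rw [hgeom, zero_mul]
end IsingReplica
end
end

section
/- Entropy bound for random lattice surfaces: Let d ≥ 2, let S₀ be a fixed face, and for r ≥ 1 let N(r) denote the number of connected surfaces consisting of exactly r faces and containing S₀. Then N(r) ≤ k_d^r with k_d = 3e·2^d (i.e. there is a constant a = 3e, independent of dimension, with N(r) ≤ (a·2^d)^r). -/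
open scoped BigOperators Classical
noncomputable section

namespace IsingReplica

section Generic
variable {V : Type*} {L : Type*} (nb : V → L → V)

/-- Run a DFS word: `some j` pushes `nb top j`, `none` pops. -/
def run : List (Option L) → List V × Finset V → List V × Finset V
  | [], s => s
  | none :: w, s => run w (s.1.tail, s.2)
  | some j :: w, s =>
    match s.1 with
    | [] => run w ([], s.2)
    | v :: rest => run w (nb v j :: v :: rest, insert (nb v j) s.2)

lemma run_append (w₁ w₂ : List (Option L)) (s : List V × Finset V) :
    run nb (w₁ ++ w₂) s = run nb w₂ (run nb w₁ s) := by
  induction w₁ generalizing s with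
  | nil => rfl
  | cons a w ih =>
    cases a with
    | none => simpa [run] using ih _
    | some j =>
      rcases s with ⟨st, acc⟩
      cases st with
      | nil => simpa [run] using ih _
      | cons v rest => simpa [run] using ih _

lemma exists_word {adj : V → V → Prop} (hnb : ∀ a b, adj a b → ∃ l, nb a l = b) :
    ∀ (n : ℕ) (Y : Finset V) (x : V), Y.card = n → x ∈ Y →
      (∀ a ∈ Y, Relation.ReflTransGen (fun p q => p ∈ Y ∧ q ∈ Y ∧ adj p q) x a) →
      ∃ w : List (Option L),
        (w.filter Option.isSome).length = n - 1 ∧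
        (w.filter Option.isNone).length = n - 1 ∧
        ∀ st acc, run nb w (x :: st, acc) = (x :: st, acc ∪ Y.erase x) := by
  intro n
  induction n using Nat.strong_induction_on with
  | _ n IH =>
    intro Y x hcard hx hconn
    by_cases hY : Y.erase x = ∅
    · have hY1 : Y = {x} := by
        apply Finset.eq_singleton_iff_unique_mem.2
        refine ⟨hx, fun a ha => ?_⟩
        by_contra hax
        have : a ∈ Y.erase x := Finset.mem_erase.2 ⟨hax, ha⟩
        simp [hY] at this
      have hn1 : n = 1 := by rw [← hcard, hY1]; simp
      exact ⟨[], by simp [hn1], by simp [hn1], fun st acc => by simp [run, hY]⟩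
    · obtain ⟨y, hy⟩ := Finset.nonempty_iff_ne_empty.2 hY
      have hyx : y ≠ x := (Finset.mem_erase.1 hy).1
      -- trim a path to get a neighbor of x in Y.erase x
      have claim1 : ∀ b, Relation.ReflTransGen (fun p q => p ∈ Y ∧ q ∈ Y ∧ adj p q) x b →
          b ≠ x → ∃ z, adj x z ∧ z ∈ Y.erase x := by
        intro b hb
        induction hb with
        | refl => intro h; exact absurd rfl h
        | @tail b' c hab hstep ih =>
          intro hc
          by_cases hbx : b' = x
          · subst hbx
            exact ⟨c, hstep.2.2, Finset.mem_erase.2 ⟨hc, hstep.2.1⟩⟩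
          · exact ih hbx
      obtain ⟨z, hxz, hz⟩ := claim1 y (hconn y (Finset.mem_of_mem_erase hy)) hyx
      classical
      set C := (Y.erase x).filter
        (fun a => Relation.ReflTransGen
          (fun p q => p ∈ Y.erase x ∧ q ∈ Y.erase x ∧ adj p q) z a) with hC
      have hzC : z ∈ C := Finset.mem_filter.2 ⟨hz, Relation.ReflTransGen.refl⟩
      have hCsub : C ⊆ Y.erase x := Finset.filter_subset _ _
      have hxC : x ∉ C := fun h => (Finset.mem_erase.1 (hCsub h)).1 rfl
      have hCclosed : ∀ a ∈ C, ∀ b ∈ Y.erase x, adj a b → b ∈ C := by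
        intro a ha b hb hab
        exact Finset.mem_filter.2 ⟨hb,
          ((Finset.mem_filter.1 ha).2).tail ⟨hCsub ha, hb, hab⟩⟩
      -- C is internally connected from z
      have hCconn : ∀ a ∈ C,
          Relation.ReflTransGen (fun p q => p ∈ C ∧ q ∈ C ∧ adj p q) z a := by
        have key : ∀ a, Relation.ReflTransGen
            (fun p q => p ∈ Y.erase x ∧ q ∈ Y.erase x ∧ adj p q) z a →
            Relation.ReflTransGen (fun p q => p ∈ C ∧ q ∈ C ∧ adj p q) z a := by
          intro a ha
          induction ha with
          | refl => exact Relation.ReflTransGen.refl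
          | @tail b c hab hstep ih =>
            have hbC : b ∈ C := Finset.mem_filter.2 ⟨hstep.1, hab⟩
            have hcC : c ∈ C := hCclosed b hbC c hstep.2.1 hstep.2.2
            exact ih.tail ⟨hbC, hcC, hstep.2.2⟩
        intro a ha
        exact key a (Finset.mem_filter.1 ha).2
      -- Y \ C is connected from x
      have hYCconn : ∀ a ∈ Y \ C,
          Relation.ReflTransGen (fun p q => p ∈ Y \ C ∧ q ∈ Y \ C ∧ adj p q) x a := by
        have key : ∀ a, Relation.ReflTransGen (fun p q => p ∈ Y ∧ q ∈ Y ∧ adj p q) x a →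
            a ∉ C →
            Relation.ReflTransGen (fun p q => p ∈ Y \ C ∧ q ∈ Y \ C ∧ adj p q) x a := by
          intro a ha
          induction ha with
          | refl => intro _; exact Relation.ReflTransGen.refl
          | @tail b c hab hstep ih =>
            intro hcC
            by_cases hbC : b ∈ C
            · by_cases hcx : c = x
              · subst hcx; exact Relation.ReflTransGen.refl
              · exact absurd (hCclosed b hbC c (Finset.mem_erase.2 ⟨hcx, hstep.2.1⟩)
                  hstep.2.2) hcC
            · exact (ih hbC).tail ⟨Finset.mem_sdiff.2 ⟨hstep.1, hbC⟩,
                Finset.mem_sdiff.2 ⟨hstep.2.1, hcC⟩, hstep.2.2⟩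
        intro a ha
        exact key a (hconn a (Finset.mem_sdiff.1 ha).1) (Finset.mem_sdiff.1 ha).2
      have hxYC : x ∈ Y \ C := Finset.mem_sdiff.2 ⟨hx, hxC⟩
      have hCY : C ⊆ Y := hCsub.trans (Finset.erase_subset _ _)
      have hcardC : C.card < n := by
        have h1 : C.card ≤ (Y.erase x).card := Finset.card_le_card hCsub
        have h2 : (Y.erase x).card < Y.card := Finset.card_erase_lt_of_mem hx
        omega
      have hcardYC : (Y \ C).card < n := by
        have h1 : (Y \ C).card = Y.card - C.card := Finset.card_sdiff_of_subset hCY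
        have h2 : 1 ≤ C.card := Finset.card_pos.2 ⟨z, hzC⟩
        omega
      obtain ⟨w₁, hw₁s, hw₁n, hrun₁⟩ := IH C.card hcardC C z rfl hzC hCconn
      obtain ⟨w₂, hw₂s, hw₂n, hrun₂⟩ := IH (Y \ C).card hcardYC (Y \ C) x rfl hxYC hYCconn
      obtain ⟨l, hl⟩ := hnb x z hxz
      have h2 : 1 ≤ C.card := Finset.card_pos.2 ⟨z, hzC⟩
      have h3 : 1 ≤ (Y \ C).card := Finset.card_pos.2 ⟨x, hxYC⟩
      have hsum : C.card + (Y \ C).card = n := by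
        have h1 : (Y \ C).card = Y.card - C.card := Finset.card_sdiff_of_subset hCY
        have h4 : C.card ≤ Y.card := Finset.card_le_card hCY
        omega
      refine ⟨some l :: (w₁ ++ (none :: w₂)), ?_, ?_, ?_⟩
      · simp only [List.filter_cons, List.filter_append, List.length_append,
          List.length_cons, Option.isSome]
        simp [hw₁s, hw₂s]
        omega
      · simp only [List.filter_cons, List.filter_append, List.length_append,
          List.length_cons, Option.isNone]
        simp [hw₁n, hw₂n]
        omega
      · intro st acc
        have step1 : run nb (some l :: (w₁ ++ (none :: w₂))) (x :: st, acc)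
            = run nb (w₁ ++ (none :: w₂)) (z :: x :: st, insert z acc) := by
          simp [run, hl]
        rw [step1, run_append, hrun₁]
        have step2 : run nb (none :: w₂) (z :: x :: st, insert z acc ∪ C.erase z)
            = run nb w₂ (x :: st, insert z acc ∪ C.erase z) := by
          simp [run]
        rw [step2, hrun₂]
        have key : insert z acc ∪ C.erase z ∪ (Y \ C).erase x = acc ∪ Y.erase x := by
          have e1 : insert z acc ∪ C.erase z = acc ∪ C := by
            rw [Finset.insert_union, ← Finset.union_insert, Finset.insert_erase hzC]
          rw [e1, Finset.union_assoc]
          congr 1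
          ext a
          simp only [Finset.mem_union, Finset.mem_erase, Finset.mem_sdiff]
          constructor
          · rintro (haC | ⟨hax, haY, _⟩)
            · exact Finset.mem_erase.1 (hCsub haC)
            · exact ⟨hax, haY⟩
          · rintro ⟨hax, haY⟩
            by_cases haC : a ∈ C
            · exact Or.inl haC
            · exact Or.inr ⟨hax, haY, haC⟩
        rw [key]

/-- Build a word from a backtrack predicate and a label list. -/
def mkW (p : ℕ → Bool) : ℕ → ℕ → List L → List (Option L)
  | 0, _, _ => []
  | n+1, i, ls =>
    if p i then none :: mkW p n (i+1) ls
    else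
      match ls with
      | [] => none :: mkW p n (i+1) []
      | j :: ls' => some j :: mkW p n (i+1) ls'

lemma mkW_recon (p : ℕ → Bool) :
    ∀ (w : List (Option L)) (i : ℕ) (rest : List L),
      (∀ t (h : t < w.length), (p (i + t) = true ↔ w[t] = none)) →
      mkW p w.length i (w.reduceOption ++ rest) = w := by
  intro w
  induction w with
  | nil => intro i rest _; rfl
  | cons a w ih =>
    intro i rest hp
    cases a with
    | none =>
      have hpi : p i = true := by simpa using (hp 0 (by simp)).2 (by simp)
      have : mkW p (w.length + 1) i (w.reduceOption ++ rest)
          = none :: mkW p w.length (i+1) (w.reduceOption ++ rest) := by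
        simp [mkW, hpi, List.reduceOption_cons_of_none]
      rw [List.length_cons, List.reduceOption_cons_of_none, this,
        ih (i+1) rest (fun t ht => by
          have := hp (t+1) (by simpa using Nat.succ_lt_succ ht)
          simpa [Nat.add_assoc, Nat.add_comm 1 t] using this)]
    | some j =>
      have hpi : p i = false := by
        rw [Bool.eq_false_iff]
        intro h
        have := (hp 0 (by simp)).1 h
        simp at this
      have : mkW p (w.length + 1) i ((some j :: w).reduceOption ++ rest)
          = some j :: mkW p w.length (i+1) (w.reduceOption ++ rest) := by
        simp [mkW, hpi, List.reduceOption_cons_of_some]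
      rw [List.length_cons, this,
        ih (i+1) rest (fun t ht => by
          have := hp (t+1) (by simpa using Nat.succ_lt_succ ht)
          simpa [Nat.add_assoc, Nat.add_comm 1 t] using this)]

lemma mkW_recon' (p : ℕ → Bool) (w : List (Option L)) (n : ℕ) (ls : List L)
    (hn : n = w.length) (hls : ls = w.reduceOption)
    (hp : ∀ t (h : t < w.length), (p t = true ↔ w[t] = none)) :
    mkW p n 0 ls = w := by
  subst hn
  subst hls
  rw [← List.append_nil w.reduceOption]
  exact mkW_recon p w 0 [] (fun t h => by simpa using hp t h)

end Generic

/-- The `i`-th coordinate different from `k`. -/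
def skip {d : ℕ} (k : Fin d) (i : Fin (d - 1)) : Fin d :=
  if h : (i : ℕ) < (k : ℕ) then ⟨i, lt_trans h k.isLt⟩
  else ⟨i + 1, by have := i.isLt; have := k.isLt; omega⟩

lemma skip_surj {d : ℕ} (k j : Fin d) (h : j ≠ k) : ∃ i, skip k i = j := by
  have hd := k.isLt
  have hj := j.isLt
  have hjk : (j : ℕ) ≠ (k : ℕ) := fun hh => h (Fin.ext hh)
  by_cases hlt : (j : ℕ) < (k : ℕ)
  · refine ⟨⟨j, by omega⟩, ?_⟩
    rw [skip, dif_pos (by simpa using hlt)]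
  · refine ⟨⟨(j : ℕ) - 1, by omega⟩, ?_⟩
    rw [skip, dif_neg (by simp; omega)]
    exact Fin.ext (by simp; omega)

/-- Enumeration of the possible neighbors of a face. -/
def nbr {d : ℕ} (F : Face d) (l : Fin 6 × Fin (d - 1)) : Face d :=
  let k := F.2
  let j := skip k l.2
  let c := F.1
  if (l.1 : ℕ) = 0 then (c + unitVec j, k)
  else if (l.1 : ℕ) = 1 then (c - unitVec j, k)
  else if (l.1 : ℕ) = 2 then (c, j)
  else if (l.1 : ℕ) = 3 then (c - unitVec j, j)
  else if (l.1 : ℕ) = 4 then (c + unitVec k, j)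
  else (c + unitVec k - unitVec j, j)

lemma adj_nbr {d : ℕ} (F F' : Face d) (h : adjFace F F') :
    ∃ l : Fin 6 × Fin (d - 1), nbr F l = F' := by
  obtain ⟨hne, j₁, j₂, hj12, z, hsub⟩ := h
  obtain ⟨c, k⟩ := F
  obtain ⟨c', k'⟩ := F'
  -- basic membership facts
  have hz : z ∈ faceSet (c, k) ∧ z ∈ faceSet (c', k') :=
    hsub ⟨rfl, rfl, fun j _ _ => ⟨le_refl _, by linarith⟩⟩
  have hpert : ∀ j₀, j₀ ≠ j₁ → j₀ ≠ j₂ →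
      (Function.update z j₀ (z j₀ + 1)) ∈ faceSet (c, k) ∧
      (Function.update z j₀ (z j₀ + 1)) ∈ faceSet (c', k') := by
    intro j₀ h1 h2
    refine hsub ⟨?_, ?_, ?_⟩
    · rw [Function.update_of_ne (Ne.symm h1)]
    · rw [Function.update_of_ne (Ne.symm h2)]
    · intro j hj1 hj2
      by_cases hjj : j = j₀
      · subst hjj; rw [Function.update_self]; constructor <;> linarith
      · rw [Function.update_of_ne hjj]; constructor <;> linarith
  -- orientation coordinates are among j₁, j₂
  have hk12 : k = j₁ ∨ k = j₂ := by
    by_contra hc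
    push_neg at hc
    have h1 : z k = (c k : ℝ) + 1/2 := hz.1.1
    have h2 : (Function.update z k (z k + 1)) k = (c k : ℝ) + 1/2 := (hpert k hc.1 hc.2).1.1
    rw [Function.update_self] at h2
    linarith
  have hk'12 : k' = j₁ ∨ k' = j₂ := by
    by_contra hc
    push_neg at hc
    have h1 : z k' = (c' k' : ℝ) + 1/2 := hz.2.1
    have h2 : (Function.update z k' (z k' + 1)) k' = (c' k' : ℝ) + 1/2 := (hpert k' hc.1 hc.2).2.1
    rw [Function.update_self] at h2
    linarith
  -- coordinates away from j₁,j₂ are pinned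
  have hpin : ∀ j, j ≠ j₁ → j ≠ j₂ →
      (j ≠ k → (c j : ℝ) = z j + 1/2) ∧ (j ≠ k' → (c' j : ℝ) = z j + 1/2) := by
    intro j h1 h2
    constructor
    · intro hjk
      have ha : |z j - (c j : ℝ)| ≤ 1/2 := hz.1.2 j hjk
      have hb : |(Function.update z j (z j + 1)) j - (c j : ℝ)| ≤ 1/2 :=
        (hpert j h1 h2).1.2 j hjk
      rw [Function.update_self] at hb
      rw [abs_le] at ha hb
      linarith [ha.1, ha.2, hb.1, hb.2]
    · intro hjk
      have ha : |z j - (c' j : ℝ)| ≤ 1/2 := hz.2.2 j hjk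
      have hb : |(Function.update z j (z j + 1)) j - (c' j : ℝ)| ≤ 1/2 :=
        (hpert j h1 h2).2.2 j hjk
      rw [Function.update_self] at hb
      rw [abs_le] at ha hb
      linarith [ha.1, ha.2, hb.1, hb.2]
  by_cases hkk : k = k'
  · -- same orientation
    subst hkk
    have hck : c k = c' k := by
      have h1 : z k = (c k : ℝ) + 1/2 := hz.1.1
      have h2 : z k = (c' k : ℝ) + 1/2 := hz.2.1
      have : (c k : ℝ) = (c' k : ℝ) := by linarith
      exact_mod_cast this
    -- the other distinguished coordinate
    obtain ⟨j₀, hj₀k, hcover⟩ : ∃ j₀, j₀ ≠ k ∧ ∀ j, j ≠ k → j ≠ j₀ → j ≠ j₁ ∧ j ≠ j₂ := by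
      rcases hk12 with hk | hk
      · refine ⟨j₂, ?_, ?_⟩
        · rw [hk]; exact Ne.symm hj12
        · intro j hj1 hj2
          exact ⟨by rw [← hk]; exact hj1, hj2⟩
      · refine ⟨j₁, ?_, ?_⟩
        · rw [hk]; exact hj12
        · intro j hj1 hj2
          exact ⟨hj2, by rw [← hk]; exact hj1⟩
    have hother : ∀ j, j ≠ k → j ≠ j₀ → c j = c' j := by
      intro j hjk hjj0
      obtain ⟨h1, h2⟩ := hcover j hjk hjj0
      have e1 := (hpin j h1 h2).1 hjk
      have e2 := (hpin j h1 h2).2 hjk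
      have : (c j : ℝ) = (c' j : ℝ) := by linarith
      exact_mod_cast this
    have hj₀ : c j₀ - 1 ≤ c' j₀ ∧ c' j₀ ≤ c j₀ + 1 := by
      have ha : |z j₀ - (c j₀ : ℝ)| ≤ 1/2 := hz.1.2 j₀ hj₀k
      have hb : |z j₀ - (c' j₀ : ℝ)| ≤ 1/2 := hz.2.2 j₀ hj₀k
      rw [abs_le] at ha hb
      constructor
      · have : (c j₀ : ℝ) - 1 ≤ (c' j₀ : ℝ) := by linarith [ha.1, ha.2, hb.1, hb.2]
        exact_mod_cast this
      · have : (c' j₀ : ℝ) ≤ (c j₀ : ℝ) + 1 := by linarith [ha.1, ha.2, hb.1, hb.2]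
        exact_mod_cast this
    have htri : c' j₀ = c j₀ - 1 ∨ c' j₀ = c j₀ ∨ c' j₀ = c j₀ + 1 := by omega
    obtain ⟨i, hi⟩ := skip_surj k j₀ hj₀k
    rcases htri with he | he | he
    · refine ⟨(⟨1, by norm_num⟩, i), ?_⟩
      rw [nbr]
      simp only [hi]
      norm_num
      funext j
      simp only [Pi.sub_apply, unitVec]
      by_cases hjj : j = j₀
      · subst hjj; simp [he]
      · rw [if_neg hjj]
        by_cases hjk : j = k
        · subst hjk; simp [hck]
        · simp [hother j hjk hjj]
    · exfalso
      apply hne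
      have hcc : c = c' := by
        funext j
        by_cases hjj : j = j₀
        · rw [hjj]; omega
        · by_cases hjk : j = k
          · rw [hjk]; exact hck
          · exact hother j hjk hjj
      rw [hcc]
    · refine ⟨(⟨0, by norm_num⟩, i), ?_⟩
      rw [nbr]
      simp only [hi]
      norm_num
      funext j
      simp only [Pi.add_apply, unitVec]
      by_cases hjj : j = j₀
      · subst hjj; simp [he]
      · rw [if_neg hjj]
        by_cases hjk : j = k
        · subst hjk; simp [hck]
        · simp [hother j hjk hjj]
  · -- perpendicular orientations
    have hcover : ∀ j, j ≠ k → j ≠ k' → j ≠ j₁ ∧ j ≠ j₂ := by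
      intro j hjk hjk'
      rcases hk12 with hk | hk <;> rcases hk'12 with hk' | hk'
      · exact absurd (hk.trans hk'.symm) hkk
      · exact ⟨hk ▸ hjk, hk' ▸ hjk'⟩
      · exact ⟨hk' ▸ hjk', hk ▸ hjk⟩
      · exact absurd (hk.trans hk'.symm) hkk
    have hother : ∀ j, j ≠ k → j ≠ k' → c j = c' j := by
      intro j hjk hjk'
      obtain ⟨h1, h2⟩ := hcover j hjk hjk'
      have e1 := (hpin j h1 h2).1 hjk
      have e2 := (hpin j h1 h2).2 hjk'
      have : (c j : ℝ) = (c' j : ℝ) := by linarith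
      exact_mod_cast this
    -- coordinate k
    have hck : c' k = c k ∨ c' k = c k + 1 := by
      have h1 : z k = (c k : ℝ) + 1/2 := hz.1.1
      have hb : |z k - (c' k : ℝ)| ≤ 1/2 := hz.2.2 k hkk
      rw [abs_le] at hb
      have e1 : (c k : ℝ) ≤ (c' k : ℝ) := by linarith [hb.1, hb.2]
      have e2 : (c' k : ℝ) ≤ (c k : ℝ) + 1 := by linarith [hb.1, hb.2]
      have e1' : c k ≤ c' k := by exact_mod_cast e1
      have e2' : c' k ≤ c k + 1 := by exact_mod_cast e2
      omega
    -- coordinate k'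
    have hck' : c' k' = c k' ∨ c' k' = c k' - 1 := by
      have h1 : z k' = (c' k' : ℝ) + 1/2 := hz.2.1
      have hb : |z k' - (c k' : ℝ)| ≤ 1/2 := hz.1.2 k' (Ne.symm hkk)
      rw [abs_le] at hb
      have e1 : (c k' : ℝ) - 1 ≤ (c' k' : ℝ) := by linarith [hb.1, hb.2]
      have e2 : (c' k' : ℝ) ≤ (c k' : ℝ) := by linarith [hb.1, hb.2]
      have e1' : c k' - 1 ≤ c' k' := by exact_mod_cast e1
      have e2' : c' k' ≤ c k' := by exact_mod_cast e2
      omega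
    obtain ⟨i, hi⟩ := skip_surj k k' (Ne.symm hkk)
    have hfst : ∀ (u : Site d), (∀ j, u j = c' j) → (u, k') = ((c', k') : Face d) := by
      intro u hu
      exact Prod.ext (funext hu) rfl
    rcases hck with ha | ha <;> rcases hck' with hb | hb
    · refine ⟨(⟨2, by norm_num⟩, i), ?_⟩
      rw [nbr]; simp only [hi]; norm_num
      funext j
      by_cases h1 : j = k
      · rw [h1]; omega
      · by_cases h2 : j = k'
        · rw [h2]; omega
        · exact hother j h1 h2
    · refine ⟨(⟨3, by norm_num⟩, i), ?_⟩
      rw [nbr]; simp only [hi]; norm_num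
      funext j
      simp only [Pi.sub_apply, unitVec]
      by_cases h2 : j = k'
      · subst h2; simp; omega
      · rw [if_neg h2]
        by_cases h1 : j = k
        · subst h1; simp; omega
        · simp [hother j h1 h2]
    · refine ⟨(⟨4, by norm_num⟩, i), ?_⟩
      rw [nbr]; simp only [hi]; norm_num
      funext j
      simp only [Pi.add_apply, unitVec]
      by_cases h1 : j = k
      · subst h1; simp; omega
      · rw [if_neg h1]
        by_cases h2 : j = k'
        · subst h2; simp; omega
        · simp [hother j h1 h2]
    · refine ⟨(⟨5, by norm_num⟩, i), ?_⟩
      rw [nbr]; simp only [hi]; norm_num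
      funext j
      simp only [Pi.sub_apply, Pi.add_apply, unitVec]
      by_cases h1 : j = k
      · rw [if_pos h1, if_neg (by rw [h1]; exact hkk), h1]
        omega
      · rw [if_neg h1]
        by_cases h2 : j = k'
        · rw [if_pos h2, h2]
          omega
        · rw [if_neg h2]; simp [hother j h1 h2]


section Glue
variable {d : ℕ}

lemma length_filter_opt {L : Type*} (l : List (Option L)) :
    l.length = (l.filter Option.isSome).length + (l.filter Option.isNone).length := by
  induction l with
  | nil => simp
  | cons a t ih =>
    cases a <;> simp [List.filter_cons, ih] <;> omega

lemma reduceOption_length_eq {L : Type*} (l : List (Option L)) :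
    l.reduceOption.length = (l.filter Option.isSome).length := by
  induction l with
  | nil => simp
  | cons a t ih =>
    cases a <;> simp [List.filter_cons, List.reduceOption_cons_of_none,
      List.reduceOption_cons_of_some, ih]

lemma nat_pow_aux : ∀ n : ℕ, 2 ≤ n → 4 * (n - 1) ≤ 2 ^ n := by
  intro n hn
  induction n with
  | zero => omega
  | succ m ih =>
    by_cases hm : 2 ≤ m
    · have := ih hm
      have h2 : 4 ≤ 2 ^ m := by
        calc 4 = 2 ^ 2 := by norm_num
        _ ≤ 2 ^ m := Nat.pow_le_pow_right (by norm_num) hm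
      have : 4 * (m + 1 - 1) = 4 * (m - 1) + 4 := by omega
      rw [this, pow_succ]
      omega
    · interval_cases m <;> simp
end Glue

/-- **Entropy bound for random lattice surfaces.** For `d ≥ 2`, a fixed face `S₀` and
`r ≥ 1`, the number `N(r)` of connected surfaces with exactly `r` faces containing `S₀`
satisfies `N(r) ≤ k_d^r` with `k_d = 3e·2^d`. -/
theorem entropy_bound_random_surfaces (d : ℕ) (hd : 2 ≤ d) (S₀ : Face d)
    (r : ℕ) (hr : 1 ≤ r) :
    {Y : Finset (Face d) | Y.card = r ∧ S₀ ∈ Y ∧ SurfConnected Y}.Finite ∧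
      (({Y : Finset (Face d) | Y.card = r ∧ S₀ ∈ Y ∧ SurfConnected Y}.ncard : ℝ) ≤
        (3 * Real.exp 1 * 2 ^ d) ^ r) := by
  classical
  set k := r - 1 with hk
  have hdflt : (0 : ℕ) < d - 1 := by omega
  let dflt : Fin 6 × Fin (d - 1) := (0, ⟨0, hdflt⟩)
  set D : Finset (Fin (2 * k)) × (Fin k → Fin 6 × Fin (d - 1)) → Finset (Face d) := fun t =>
    insert S₀ (run nbr
      (mkW (fun i => decide (∃ h : i < 2 * k, (⟨i, h⟩ : Fin (2 * k)) ∈ t.1))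
        (2 * k) 0 (List.ofFn t.2)) ([S₀], ∅)).2 with hD
  have hcover : ∀ Y : Finset (Face d),
      Y.card = r → S₀ ∈ Y → SurfConnected Y →
      ∃ t : Finset (Fin (2 * k)) × (Fin k → Fin 6 × Fin (d - 1)), D t = Y := by
    intro Y hY hS₀ hconn
    obtain ⟨w, hws, hwn, hrun⟩ :=
      exists_word (nb := nbr) (adj := adjFace) (fun a b hab => adj_nbr a b hab)
        r Y S₀ hY hS₀ (fun a ha => hconn S₀ hS₀ a ha)
    have hlen : w.length = 2 * k := by
      have := length_filter_opt w
      omega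
    have hred : w.reduceOption.length = k := by
      rw [reduceOption_length_eq, hws]
    set S : Finset (Fin (2 * k)) :=
      Finset.univ.filter (fun i : Fin (2 * k) => w[(i : ℕ)]'(by rw [hlen]; exact i.isLt) = none)
      with hS
    set g : Fin k → Fin 6 × Fin (d - 1) := fun i => w.reduceOption.getD i dflt with hg
    have hofFn : List.ofFn g = w.reduceOption := by
      apply List.ext_getElem
      · simp [hred]
      · intro i h1 h2
        simp only [List.getElem_ofFn, hg]
        exact List.getD_eq_getElem _ _ _
    refine ⟨(S, g), ?_⟩
    have hrecon : mkW (fun i => decide (∃ h : i < 2 * k, (⟨i, h⟩ : Fin (2 * k)) ∈ S))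
        (2 * k) 0 (List.ofFn g) = w := by
      apply mkW_recon' _ w _ _ hlen.symm hofFn
      intro t ht
      simp only [Nat.zero_add, decide_eq_true_eq]
      constructor
      · rintro ⟨hh, hmem⟩
        simpa [hS] using hmem
      · intro hnone
        refine ⟨by omega, ?_⟩
        simp [hS]
        convert hnone
    show insert S₀ (run nbr
        (mkW (fun i => decide (∃ h : i < 2 * k, (⟨i, h⟩ : Fin (2 * k)) ∈ S))
          (2 * k) 0 (List.ofFn g)) ([S₀], ∅)).2 = Y
    rw [hrecon]
    rw [hrun [] ∅]
    simp only [Finset.empty_union]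
    ext a
    simp only [Finset.mem_insert, Finset.mem_erase]
    constructor
    · rintro (rfl | ⟨_, h⟩)
      · exact hS₀
      · exact h
    · intro h
      by_cases ha : a = S₀
      · exact Or.inl ha
      · exact Or.inr ⟨ha, h⟩
  have hsub : {Y : Finset (Face d) | Y.card = r ∧ S₀ ∈ Y ∧ SurfConnected Y} ⊆
      Set.range D := by
    rintro Y ⟨h1, h2, h3⟩
    obtain ⟨t, ht⟩ := hcover Y h1 h2 h3
    exact ⟨t, ht⟩
  have hfin : {Y : Finset (Face d) | Y.card = r ∧ S₀ ∈ Y ∧ SurfConnected Y}.Finite :=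
    (Set.finite_range D).subset hsub
  refine ⟨hfin, ?_⟩
  have hcard1 : {Y : Finset (Face d) | Y.card = r ∧ S₀ ∈ Y ∧ SurfConnected Y}.ncard ≤
      Fintype.card (Finset (Fin (2 * k)) × (Fin k → Fin 6 × Fin (d - 1))) := by
    calc {Y : Finset (Face d) | Y.card = r ∧ S₀ ∈ Y ∧ SurfConnected Y}.ncard
        ≤ (Set.range D).ncard := Set.ncard_le_ncard hsub (Set.finite_range D)
      _ = (D '' Set.univ).ncard := by rw [Set.image_univ]
      _ ≤ (Set.univ : Set (Finset (Fin (2 * k)) × (Fin k → Fin 6 × Fin (d - 1)))).ncard :=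
          Set.ncard_image_le Set.finite_univ
      _ = _ := by rw [Set.ncard_univ, Nat.card_eq_fintype_card]
  have hcardT : Fintype.card (Finset (Fin (2 * k)) × (Fin k → Fin 6 × Fin (d - 1)))
      = 2 ^ (2 * k) * (6 * (d - 1)) ^ k := by
    simp only [Fintype.card_prod, Fintype.card_finset, Fintype.card_fun, Fintype.card_fin]
  -- numeric bound
  have hexp : (2 : ℝ) ≤ Real.exp 1 := by
    have := Real.add_one_le_exp 1
    linarith
  have hpd : (1 : ℝ) ≤ 2 ^ d := by
    have h1 : (1 : ℕ) ≤ 2 ^ d := Nat.one_le_two_pow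
    exact_mod_cast h1
  have hA1 : (1 : ℝ) ≤ 3 * Real.exp 1 * 2 ^ d := by nlinarith
  have h24 : (24 * ((d : ℝ) - 1) : ℝ) ≤ 3 * Real.exp 1 * 2 ^ d := by
    have hnat : 4 * (d - 1) ≤ 2 ^ d := nat_pow_aux d hd
    have hcast : 4 * ((d : ℝ) - 1) ≤ 2 ^ d := by
      have : ((4 * (d - 1) : ℕ) : ℝ) ≤ ((2 ^ d : ℕ) : ℝ) := by exact_mod_cast hnat
      push_cast at this
      have hd1 : (1 : ℝ) ≤ (d : ℝ) := by exact_mod_cast Nat.one_le_of_lt hd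
      rw [Nat.cast_sub (by omega : 1 ≤ d)] at this
      push_cast at this
      linarith
    nlinarith [Real.exp_pos 1]
  calc ({Y : Finset (Face d) | Y.card = r ∧ S₀ ∈ Y ∧ SurfConnected Y}.ncard : ℝ)
      ≤ ((Fintype.card (Finset (Fin (2 * k)) × (Fin k → Fin 6 × Fin (d - 1))) : ℕ) : ℝ) := by
        exact_mod_cast hcard1
    _ = (24 * ((d : ℝ) - 1)) ^ k := by
        rw [hcardT]
        push_cast [Nat.cast_sub (by omega : 1 ≤ d)]
        rw [pow_mul, ← mul_pow]
        congr 1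
        ring
    _ ≤ (3 * Real.exp 1 * 2 ^ d) ^ k := by
        apply pow_le_pow_left₀
        · have hd1 : (1 : ℝ) ≤ (d : ℝ) := by exact_mod_cast Nat.one_le_of_lt hd
          linarith
        · exact h24
    _ ≤ (3 * Real.exp 1 * 2 ^ d) ^ r := pow_le_pow_right₀ hA1 (by omega)

end IsingReplica
end
end
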